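/- arXiv:0802.1943 — 3 statements merged into one kernel-verified Lean document; each statement's English description precedes it below -/
import Mathlib

section
/- For every crossingless matching C on {1,…,n} with exactly k cups, the number of weight sequences w such that w orients C equals 2^k. Consequently, for every standard tableau S of shape (n−k,k), the component set Y_S contains exactly 2^k torus-fixed flags. -/
open Module

namespace Springer

/-- The nilpotent endomorphism `N` of `ℂ^n` with two Jordan blocks of sizes `n-k` and `k`:
the basis vectors `e 0, …, e (n-k-1)` are `p 1, …, p (n-k)` and
`e (n-k), …, e (n-1)` are `q 1, …, q k`; `N` shifts each block down by one. -/
def Nmap (n k : ℕ) : (Fin n → ℂ) →ₗ[ℂ] (Fin n → ℂ) where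
  toFun x j := if h : j.val + 1 < n ∧ j.val + 1 ≠ n - k then x ⟨j.val + 1, h.1⟩ else 0
  map_add' x y := by
    funext j
    by_cases h : j.val + 1 < n ∧ j.val + 1 ≠ n - k <;> simp [h]
  map_smul' c x := by
    funext j
    by_cases h : j.val + 1 < n ∧ j.val + 1 ≠ n - k <;> simp [h]

/-- `span (p 1, …, p t, q 1, …, q b)` inside `ℂ^n`. -/
noncomputable def spanPQ (n k t b : ℕ) : Submodule ℂ (Fin n → ℂ) :=
  Submodule.span ℂ {x | ∃ j : Fin n,
    ((j.val < t ∧ j.val < n - k) ∨ (n - k ≤ j.val ∧ j.val < n - k + b)) ∧ x = Pi.single j 1}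

/-- `P = span (p 1, …, p (n-k))`. -/
noncomputable def Pmod (n k : ℕ) : Submodule ℂ (Fin n → ℂ) := spanPQ n k (n - k) 0

/-- `Q = span (q 1, …, q k)`. -/
noncomputable def Qmod (n k : ℕ) : Submodule ℂ (Fin n → ℂ) := spanPQ n k 0 k

/-- The projection of `V` onto `Q` along `P`. -/
def projQ (n k : ℕ) : (Fin n → ℂ) →ₗ[ℂ] (Fin n → ℂ) where
  toFun x j := if n - k ≤ j.val then x j else 0
  map_add' x y := by
    funext j
    by_cases h : n - k ≤ j.val
    · simp only [Pi.add_apply, if_pos h]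
    · simp only [Pi.add_apply, if_neg h, add_zero]
  map_smul' c x := by
    funext j
    by_cases h : n - k ≤ j.val
    · simp only [Pi.smul_apply, smul_eq_mul, if_pos h, RingHom.id_apply]
    · simp only [Pi.smul_apply, smul_eq_mul, if_neg h, mul_zero, RingHom.id_apply]

/-- A complete `N`-invariant flag in `ℂ^n`: a chain `F 0 ⊆ ⋯ ⊆ F n` with `dim F i = i`
(thus `F 0 = 0` and `F n = V`) and `N (F (i+1)) ⊆ F i`. -/
def IsNFlag (n k : ℕ) (F : Fin (n + 1) → Submodule ℂ (Fin n → ℂ)) : Prop :=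
  Monotone F ∧ (∀ i : Fin (n + 1), finrank ℂ (F i) = i.val) ∧
    ∀ i : Fin n, Submodule.map (Nmap n k) (F i.succ) ≤ F i.castSucc

/-- A flag is torus fixed if each subspace is spanned by its intersections with `P` and `Q`. -/
def TorusFixed (n k : ℕ) (F : Fin (n + 1) → Submodule ℂ (Fin n → ℂ)) : Prop :=
  ∀ i, F i = (F i ⊓ Pmod n k) ⊔ (F i ⊓ Qmod n k)

/-- A weight sequence (row-strict tableau) of shape `(n-k, k)`:
`true` encodes `∨` and `false` encodes `∧`; there are exactly `k` symbols `∨`. -/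
def IsWeightSeq (n k : ℕ) (w : Fin n → Bool) : Prop :=
  (Finset.univ.filter fun i => w i = true).card = k

/-- `t i` = number of 1-based positions `≤ i` labelled `∧`. -/
def tcount (n : ℕ) (w : Fin n → Bool) (i : ℕ) : ℕ :=
  (Finset.univ.filter fun j : Fin n => j.val < i ∧ w j = false).card

/-- `b i` = number of 1-based positions `≤ i` labelled `∨`. -/
def bcount (n : ℕ) (w : Fin n → Bool) (i : ℕ) : ℕ :=
  (Finset.univ.filter fun j : Fin n => j.val < i ∧ w j = true).card

/-- The torus fixed flag `Φ(w)` attached to a weight sequence `w`: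
`Φ(w) i = span (p 1, …, p (t i), q 1, …, q (b i))`. -/
noncomputable def PhiFlag (n k : ℕ) (w : Fin n → Bool) : Fin (n + 1) → Submodule ℂ (Fin n → ℂ) :=
  fun i => spanPQ n k (tcount n w i.val) (bcount n w i.val)

/-- A crossingless matching on the points `1, …, n`: a set of cups `(i, j)` with
`1 ≤ i < j ≤ n`, pairwise disjoint, mutually non-crossing, and such that no unmatched
point (ray) lies strictly inside any cup. -/
structure CrossinglessMatching (n : ℕ) where
  cups : Finset (ℕ × ℕ)
  mem_range : ∀ p ∈ cups, 1 ≤ p.1 ∧ p.1 < p.2 ∧ p.2 ≤ n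
  disjoint' : ∀ p ∈ cups, ∀ q ∈ cups, p ≠ q →
    p.1 ≠ q.1 ∧ p.1 ≠ q.2 ∧ p.2 ≠ q.1 ∧ p.2 ≠ q.2
  noncross : ∀ p ∈ cups, ∀ q ∈ cups, ¬(p.1 < q.1 ∧ q.1 < p.2 ∧ p.2 < q.2)
  rays_outside : ∀ p ∈ cups, ∀ m : ℕ, p.1 < m → m < p.2 → ∃ q ∈ cups, m = q.1 ∨ m = q.2

/-- The point `m ∈ {1, …, n}` is matched (lies on a cup) in `C`. -/
def Matched (n : ℕ) (C : CrossinglessMatching n) (m : ℕ) : Prop :=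
  ∃ p ∈ C.cups, m = p.1 ∨ m = p.2

/-- A standard tableau of shape `(n-k, k)`: a filling of the two-row Young diagram by
the numbers `1, …, n`, each used exactly once, with rows and columns strictly
decreasing read from the top left. -/
structure StandardTableau (n k : ℕ) where
  top : Fin (n - k) → ℕ
  bot : Fin k → ℕ
  top_strict : ∀ i j : Fin (n - k), i < j → top j < top i
  bot_strict : ∀ i j : Fin k, i < j → bot j < bot i
  col_strict : ∀ (i : Fin (n - k)) (j : Fin k), i.val = j.val → bot j < top i
  mem_iff : ∀ m : ℕ, (1 ≤ m ∧ m ≤ n) ↔ ((∃ i, top i = m) ∨ (∃ j, bot j = m))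
  top_ne_bot : ∀ (i : Fin (n - k)) (j : Fin k), top i ≠ bot j

/-- `C` is the crossingless matching `m(S)` associated with the standard tableau `S`:
it has `k` cups and its left cup endpoints are exactly the bottom-row entries of `S`. -/
def IsMatchOf (n k : ℕ) (S : StandardTableau n k) (C : CrossinglessMatching n) : Prop :=
  C.cups.card = k ∧ ∀ m : ℕ, (∃ p ∈ C.cups, p.1 = m) ↔ ∃ j, S.bot j = m

/-- The weight sequence of a standard tableau: `∨` (i.e. `true`) exactly on the
bottom-row entries. -/
def tabWeight (n k : ℕ) (S : StandardTableau n k) : Fin n → Bool :=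
  fun j => decide (∃ i, S.bot i = j.val + 1)

/-- The cup conditions cutting out `Y_S`: for every cup `(i, σ i)` of the matching,
`N ^ δ i (F (σ i)) = F (i - 1)` where `δ i = (σ i - i + 1)/2`. -/
def CupCond (n k : ℕ) (C : CrossinglessMatching n)
    (F : Fin (n + 1) → Submodule ℂ (Fin n → ℂ)) : Prop :=
  ∀ p ∈ C.cups, ∀ (h1 : p.1 - 1 < n + 1) (h2 : p.2 < n + 1),
    Submodule.map ((Nmap n k) ^ ((p.2 - p.1 + 1) / 2)) (F ⟨p.2, h2⟩) = F ⟨p.1 - 1, h1⟩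

/-- The ray conditions cutting out `Y_S` (for the weight sequence of `S`): for every
ray `m` of the matching, `F m = (N ^ b m)⁻¹ (range (N ^ (n - k - t m + b m)))`. -/
def RayCond (n k : ℕ) (w : Fin n → Bool) (C : CrossinglessMatching n)
    (F : Fin (n + 1) → Submodule ℂ (Fin n → ℂ)) : Prop :=
  ∀ m : ℕ, 1 ≤ m → ∀ hm : m < n + 1, ¬ Matched n C m →
    F ⟨m, hm⟩ = Submodule.comap ((Nmap n k) ^ (bcount n w m))
      (LinearMap.range ((Nmap n k) ^ (n - k - tcount n w m + bcount n w m)))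

/-- Membership in the (Spaltenstein–Vargas–Fung) component `Y_S`, where `C = m(S)`. -/
def InYS (n k : ℕ) (S : StandardTableau n k) (C : CrossinglessMatching n)
    (F : Fin (n + 1) → Submodule ℂ (Fin n → ℂ)) : Prop :=
  IsNFlag n k F ∧ CupCond n k C F ∧ RayCond n k (tabWeight n k S) C F

/-- The weight sequence `v` orients the crossingless matching `C`: opposite labels at
the two endpoints of every cup, and `∧` at every ray. -/
def OrientsMatching (n : ℕ) (v : Fin n → Bool) (C : CrossinglessMatching n) : Prop :=
  (∀ p ∈ C.cups, ∀ (h1 : p.1 - 1 < n) (h2 : p.2 - 1 < n),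
      v ⟨p.1 - 1, h1⟩ ≠ v ⟨p.2 - 1, h2⟩) ∧
  (∀ m : ℕ, 1 ≤ m → m ≤ n → ¬ Matched n C m → ∀ h : m - 1 < n, v ⟨m - 1, h⟩ = false)

/-- `C` is the matching `m(w)` produced from the weight sequence `w` by repeatedly
joining a pair `i < j` with `w i = ∨`, `w j = ∧` and all points strictly between them
already matched, until no such pair remains. -/
def IsMw (n : ℕ) (w : Fin n → Bool) (C : CrossinglessMatching n) : Prop :=
  (∀ p ∈ C.cups, ∀ (h1 : p.1 - 1 < n) (h2 : p.2 - 1 < n),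
      w ⟨p.1 - 1, h1⟩ = true ∧ w ⟨p.2 - 1, h2⟩ = false) ∧
  ¬ ∃ i j : ℕ, 1 ≤ i ∧ i < j ∧ j ≤ n ∧ ¬ Matched n C i ∧ ¬ Matched n C j ∧
      (∀ h : i - 1 < n, w ⟨i - 1, h⟩ = true) ∧ (∀ h : j - 1 < n, w ⟨j - 1, h⟩ = false) ∧
      (∀ m : ℕ, i < m → m < j → Matched n C m)

/-- `Cw` is the completed matching `C(w)`: a crossingless matching with `k` cups
containing `m(w) = Cm` on whose every cup `w` puts opposite labels. -/
def IsCw (n k : ℕ) (w : Fin n → Bool) (Cm Cw : CrossinglessMatching n) : Prop :=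
  Cm.cups ⊆ Cw.cups ∧ Cw.cups.card = k ∧
  ∀ p ∈ Cw.cups, ∀ (h1 : p.1 - 1 < n) (h2 : p.2 - 1 < n),
    w ⟨p.1 - 1, h1⟩ ≠ w ⟨p.2 - 1, h2⟩

/-- Membership in the closed attracting set `St(w)`, where `S = S(w)` and `Cw = C(w)`:
a flag of `Y_{S(w)}` such that `F i = Φ(w) i` for every `i` with `w i = ∧` which is a
left cup endpoint of `C(w)`. -/
def InSt (n k : ℕ) (w : Fin n → Bool) (S : StandardTableau n k)
    (Cw : CrossinglessMatching n) (F : Fin (n + 1) → Submodule ℂ (Fin n → ℂ)) : Prop :=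
  InYS n k S Cw F ∧
  ∀ i : ℕ, ∀ hi : i < n + 1, (∀ h : i - 1 < n, w ⟨i - 1, h⟩ = false) →
    (∃ p ∈ Cw.cups, p.1 = i) → F ⟨i, hi⟩ = PhiFlag n k w ⟨i, hi⟩

/-- The generating relation of `∼_C`: `a ∼ σ(a+1)` whenever `a+1` is a left cup
endpoint of `C`. -/
def cupRel (n : ℕ) (C : CrossinglessMatching n) (a b : ℕ) : Prop :=
  ∃ p ∈ C.cups, p.1 = a + 1 ∧ p.2 = b

/-- The equivalence relation `∼_C` on `{0, 1, …, n}`. -/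
def simRel (n : ℕ) (C : CrossinglessMatching n) : ℕ → ℕ → Prop :=
  Relation.EqvGen (cupRel n C)

/-- The equivalence relation `≈_{C,D}` on `{0, 1, …, n}` generated by `∼_C` and `∼_D`. -/
def approxRel (n : ℕ) (C D : CrossinglessMatching n) : ℕ → ℕ → Prop :=
  Relation.EqvGen (fun a b => cupRel n C a b ∨ cupRel n D a b)

/-- Adjacency in the glued diagram `D̄C`: `i` and `j` are joined by a cup of `C` or of `D`. -/
def Adj (n : ℕ) (C D : CrossinglessMatching n) (i j : ℕ) : Prop :=
  (i, j) ∈ C.cups ∨ (j, i) ∈ C.cups ∨ (i, j) ∈ D.cups ∨ (j, i) ∈ D.cups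

/-- Lying in the same connected component of the glued diagram `D̄C`. -/
def Conn (n : ℕ) (C D : CrossinglessMatching n) : ℕ → ℕ → Prop :=
  Relation.EqvGen (Adj n C D)

/-- The component of `v` in the glued diagram is a circle: every vertex of the
component is matched both in `C` and in `D`. -/
def IsCircleComp (n : ℕ) (C D : CrossinglessMatching n) (v : ℕ) : Prop :=
  ∀ u, Conn n C D u v → Matched n C u ∧ Matched n D u

/-- `v` is the leftmost vertex of its connected component (circle or line) of the
glued diagram. -/
def IsLeftmost (n : ℕ) (C D : CrossinglessMatching n) (v : ℕ) : Prop :=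
  1 ≤ v ∧ v ≤ n ∧ ∀ u, 1 ≤ u → Conn n C D u v → v ≤ u

/-- An orientation of the glued diagram `D̄C` (with `C = m(w)` and `D = m(w')`):
a weight sequence assigning opposite labels to the endpoints of every cup of `C` and
of `D`, agreeing with `w` at every ray of `C` and with `w'` at every ray of `D`. -/
def OrientsGlued (n k : ℕ) (w w' : Fin n → Bool) (C D : CrossinglessMatching n)
    (v : Fin n → Bool) : Prop :=
  IsWeightSeq n k v ∧
  (∀ p ∈ C.cups, ∀ (h1 : p.1 - 1 < n) (h2 : p.2 - 1 < n),
      v ⟨p.1 - 1, h1⟩ ≠ v ⟨p.2 - 1, h2⟩) ∧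
  (∀ p ∈ D.cups, ∀ (h1 : p.1 - 1 < n) (h2 : p.2 - 1 < n),
      v ⟨p.1 - 1, h1⟩ ≠ v ⟨p.2 - 1, h2⟩) ∧
  (∀ i : Fin n, ¬ Matched n C (i.val + 1) → v i = w i) ∧
  (∀ i : Fin n, ¬ Matched n D (i.val + 1) → v i = w' i)

/-- The component of `v0` in the glued diagram is orientable: it admits a labeling of
its vertices by `∧, ∨`, opposite across every edge, agreeing with `w` at every vertex
which is a ray of `C` and with `w'` at every vertex which is a ray of `D`. -/
def ComponentOrientable (n : ℕ) (w w' : Fin n → Bool) (C D : CrossinglessMatching n)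
    (v0 : ℕ) : Prop :=
  ∃ g : ℕ → Bool,
    (∀ i j, Conn n C D i v0 → Adj n C D i j → g i ≠ g j) ∧
    (∀ i, Conn n C D i v0 → 1 ≤ i → i ≤ n → ¬ Matched n C i →
      ∀ h : i - 1 < n, g i = w ⟨i - 1, h⟩) ∧
    (∀ i, Conn n C D i v0 → 1 ≤ i → i ≤ n → ¬ Matched n D i →
      ∀ h : i - 1 < n, g i = w' ⟨i - 1, h⟩)

/-- A walk in the glued multigraph `D̄C` from `a` to `b`: a list of edges, each tagged
by `true` (an edge of `C`) or `false` (an edge of `D`), consecutively incident. -/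
def IsGluedWalk (n : ℕ) (C D : CrossinglessMatching n) : ℕ → ℕ → List (Bool × ℕ × ℕ) → Prop
  | a, b, [] => a = b
  | a, b, e :: es =>
      (if e.1 = true then (e.2.1, e.2.2) ∈ C.cups else (e.2.1, e.2.2) ∈ D.cups) ∧
      ((a = e.2.1 ∧ IsGluedWalk n C D e.2.2 b es) ∨ (a = e.2.2 ∧ IsGluedWalk n C D e.2.1 b es))

/-- The standard flag of `ℂ^n`. -/
noncomputable def stdFlag (n k : ℕ) : Fin (n + 1) → Submodule ℂ (Fin n → ℂ) :=
  fun i => spanPQ n k (min i.val (n - k)) (i.val - (n - k))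



section Aux
variable {n k : ℕ}

lemma Nmap_apply (x : Fin n → ℂ) (j : Fin n) :
    Nmap n k x j = if h : j.val + 1 < n ∧ j.val + 1 ≠ n - k then x ⟨j.val + 1, h.1⟩ else 0 := rfl

lemma Npow_apply (d : ℕ) (x : Fin n → ℂ) (j : Fin n) :
    ((Nmap n k) ^ d) x j =
      if h : j.val + d < n - k ∨ (n - k ≤ j.val ∧ j.val + d < n) then
        x ⟨j.val + d, by have := j.isLt; omega⟩ else 0 := by
  induction d generalizing x j with
  | zero =>
    have hc : (j.val + 0 < n - k ∨ (n - k ≤ j.val ∧ j.val + 0 < n)) := by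
      have := j.isLt; omega
    rw [dif_pos hc]
    simp
  | succ d ih =>
    have h0 : ((Nmap n k) ^ (d + 1)) x j = ((Nmap n k) ^ d) (Nmap n k x) j := by
      rw [pow_succ, Module.End.mul_apply]
    rw [h0, ih]
    by_cases hc : j.val + d < n - k ∨ (n - k ≤ j.val ∧ j.val + d < n)
    · rw [dif_pos hc, Nmap_apply]
      by_cases hc2 : j.val + d + 1 < n ∧ j.val + d + 1 ≠ n - k
      · rw [dif_pos hc2, dif_pos (by omega : j.val + (d+1) < n - k ∨ (n - k ≤ j.val ∧ j.val + (d+1) < n))]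
        congr 1
      · rw [dif_neg hc2, dif_neg (by omega)]
    · rw [dif_neg hc, dif_neg (by omega)]

/-- The support condition cutting out `spanPQ n k t b`. -/
def pqOK (n k t b : ℕ) (j : ℕ) : Prop := (j < t ∧ j < n - k) ∨ (n - k ≤ j ∧ j < n - k + b)

instance (n k t b : ℕ) : DecidablePred (pqOK n k t b) := fun _ => by
  unfold pqOK; infer_instance

lemma mem_spanPQ {t b : ℕ} (x : Fin n → ℂ) :
    x ∈ spanPQ n k t b ↔ ∀ j : Fin n, ¬ pqOK n k t b j.val → x j = 0 := by
  classical
  constructor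
  · intro hx
    let W : Submodule ℂ (Fin n → ℂ) :=
      { carrier := {x | ∀ j : Fin n, ¬ pqOK n k t b j.val → x j = 0}
        add_mem' := by intro a b ha hb j hj; simp [ha j hj, hb j hj]
        zero_mem' := by intro j hj; rfl
        smul_mem' := by intro c a ha j hj; simp [ha j hj] }
    have hle : spanPQ n k t b ≤ W := by
      rw [spanPQ, Submodule.span_le]
      rintro y ⟨j, hj, rfl⟩ j' hj'
      have : j' ≠ j := by rintro rfl; exact hj' hj
      exact Pi.single_eq_of_ne this 1
    exact hle hx
  · intro h
    have hx : x = ∑ j ∈ Finset.univ.filter (fun j : Fin n => pqOK n k t b j.val),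
        x j • (Pi.single j 1 : Fin n → ℂ) := by
      funext l
      rw [Finset.sum_apply]
      by_cases hl : pqOK n k t b l.val
      · rw [Finset.sum_eq_single l]
        · simp
        · intro j hj hne
          simp [Pi.single_eq_of_ne (Ne.symm hne)]
        · intro hl'
          exact absurd (Finset.mem_filter.2 ⟨Finset.mem_univ l, hl⟩) hl'
      · rw [Finset.sum_eq_zero, (h l hl)]
        intro j hj
        have hne : l ≠ j := by rintro rfl; exact hl (Finset.mem_filter.1 hj).2
        simp [Pi.single_eq_of_ne hne]
    rw [hx]
    refine Submodule.sum_mem _ (fun j hj => Submodule.smul_mem _ _ ?_)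
    exact Submodule.subset_span ⟨j, (Finset.mem_filter.1 hj).2, rfl⟩

lemma single_mem_spanPQ {t b : ℕ} {j : Fin n} (hj : pqOK n k t b j.val) :
    (Pi.single j 1 : Fin n → ℂ) ∈ spanPQ n k t b :=
  Submodule.subset_span ⟨j, hj, rfl⟩

lemma spanPQ_mono {t b t' b' : ℕ} (ht : t ≤ t') (hb : b ≤ b') :
    spanPQ n k t b ≤ spanPQ n k t' b' := by
  intro x hx
  rw [mem_spanPQ] at hx ⊢
  intro j hj
  refine hx j (fun h => hj ?_)
  rcases h with h | h
  · exact Or.inl ⟨lt_of_lt_of_le h.1 ht, h.2⟩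
  · exact Or.inr ⟨h.1, by omega⟩

lemma spanPQ_top (hk : k ≤ n) : spanPQ n k (n - k) k = ⊤ := by
  rw [eq_top_iff]
  intro x _
  rw [mem_spanPQ]
  intro j hj
  exact absurd (by have := j.isLt; rcases Nat.lt_or_ge j.val (n-k) with h | h
                   · exact Or.inl ⟨h, h⟩
                   · exact Or.inr ⟨h, by omega⟩) hj

lemma card_filter_val (P : ℕ → Prop) [DecidablePred P] :
    (Finset.univ.filter fun j : Fin n => P j.val).card = ((Finset.range n).filter P).card := by
  refine Finset.card_bij (fun j _ => j.val) ?_ ?_ ?_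
  · intro a ha
    exact Finset.mem_filter.2 ⟨Finset.mem_range.2 a.isLt, (Finset.mem_filter.1 ha).2⟩
  · intro a _ b _ h
    exact Fin.ext h
  · intro b hb
    rcases Finset.mem_filter.1 hb with ⟨hbn, hPb⟩
    exact ⟨⟨b, Finset.mem_range.1 hbn⟩, Finset.mem_filter.2 ⟨Finset.mem_univ _, hPb⟩, rfl⟩

lemma card_pqOK (hk : k ≤ n) {t b : ℕ} (ht : t ≤ n - k) (hb : b ≤ k) :
    ((Finset.range n).filter (pqOK n k t b)).card = t + b := by
  classical
  have : ((Finset.range n).filter (pqOK n k t b)) =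
      Finset.range t ∪ Finset.Ico (n - k) (n - k + b) := by
    ext m
    simp only [Finset.mem_filter, Finset.mem_range, Finset.mem_union, Finset.mem_Ico, pqOK]
    omega
  rw [this, Finset.card_union_of_disjoint]
  · rw [Finset.card_range, Nat.card_Ico]
    omega
  · rw [Finset.disjoint_left]
    intro m hm hm'
    simp only [Finset.mem_range] at hm
    simp only [Finset.mem_Ico] at hm'
    omega

lemma finrank_spanPQ (hk : k ≤ n) {t b : ℕ} (ht : t ≤ n - k) (hb : b ≤ k) :
    finrank ℂ (spanPQ n k t b) = t + b := by
  classical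
  have hset : {x : Fin n → ℂ | ∃ j : Fin n,
      ((j.val < t ∧ j.val < n - k) ∨ (n - k ≤ j.val ∧ j.val < n - k + b)) ∧ x = Pi.single j 1} =
      Set.range (fun j : {j : Fin n // pqOK n k t b j.val} => (Pi.single j.val 1 : Fin n → ℂ)) := by
    ext x
    constructor
    · rintro ⟨j, hj, rfl⟩; exact ⟨⟨j, hj⟩, rfl⟩
    · rintro ⟨⟨j, hj⟩, rfl⟩; exact ⟨j, hj, rfl⟩
  have hli : LinearIndependent ℂ
      (fun j : {j : Fin n // pqOK n k t b j.val} => (Pi.single j.val 1 : Fin n → ℂ)) := by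
    have h2 : (fun j : {j : Fin n // pqOK n k t b j.val} => (Pi.single j.val 1 : Fin n → ℂ)) =
        (Pi.basisFun ℂ (Fin n)) ∘ (fun j => j.val) := by
      funext j; simp
    rw [h2]
    exact (Pi.basisFun ℂ (Fin n)).linearIndependent.comp _ Subtype.val_injective
  rw [spanPQ, hset, finrank_span_eq_card hli, Fintype.card_subtype]
  exact (card_filter_val (pqOK n k t b)).trans (card_pqOK hk ht hb)

lemma spanPQ_eq_iff (hk : k ≤ n) {t b t' b' : ℕ} (ht : t ≤ n - k) (hb : b ≤ k)
    (ht' : t' ≤ n - k) (hb' : b' ≤ k) :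
    spanPQ n k t b = spanPQ n k t' b' ↔ t = t' ∧ b = b' := by
  constructor
  · intro h
    have key : ∀ t1 b1 t2 b2, t1 ≤ n - k → b1 ≤ k → t2 ≤ n - k →
        spanPQ n k t1 b1 ≤ spanPQ n k t2 b2 → t1 ≤ t2 ∧ b1 ≤ b2 := by
      intro t1 b1 t2 b2 h1 h2 h3 hle
      constructor
      · by_contra hlt
        push_neg at hlt
        have hj : t2 < n := by omega
        have hp1 : pqOK n k t1 b1 t2 := Or.inl ⟨hlt, by omega⟩
        have hp2 : ¬ pqOK n k t2 b2 t2 := by simp only [pqOK]; omega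
        have hmem := hle (single_mem_spanPQ (j := ⟨t2, hj⟩) hp1)
        rw [mem_spanPQ] at hmem
        have := hmem ⟨t2, hj⟩ hp2
        simp at this
      · by_contra hlt
        push_neg at hlt
        have hj : n - k + b2 < n := by omega
        have hp1 : pqOK n k t1 b1 (n - k + b2) := Or.inr ⟨by omega, by omega⟩
        have hp2 : ¬ pqOK n k t2 b2 (n - k + b2) := by simp only [pqOK]; omega
        have hmem := hle (single_mem_spanPQ (j := ⟨n - k + b2, hj⟩) hp1)
        rw [mem_spanPQ] at hmem
        have := hmem ⟨n - k + b2, hj⟩ hp2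
        simp at this
    have h1 := key t b t' b' ht hb ht' h.le
    have h2 := key t' b' t b ht' hb' ht h.ge
    omega
  · rintro ⟨rfl, rfl⟩; rfl

lemma spanPQ_inf_P {t b : ℕ} : spanPQ n k t b ⊓ Pmod n k = spanPQ n k t 0 := by
  ext x
  rw [Submodule.mem_inf, Pmod, mem_spanPQ, mem_spanPQ, mem_spanPQ]
  constructor
  · rintro ⟨h1, h2⟩ j hj
    by_cases hcase : j.val < n - k
    · exact h1 j (by simp only [pqOK] at hj ⊢; omega)
    · exact h2 j (by simp only [pqOK] at hj ⊢; omega)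
  · intro h
    exact ⟨fun j hj => by
        by_cases hcase : j.val < n - k
        · exact h j (by simp only [pqOK] at hj ⊢; omega)
        · exact h j (by simp only [pqOK]; omega),
      fun j hj => h j (by simp only [pqOK] at hj ⊢; omega)⟩

lemma spanPQ_inf_Q {t b : ℕ} : spanPQ n k t b ⊓ Qmod n k = spanPQ n k 0 b := by
  ext x
  rw [Submodule.mem_inf, Qmod, mem_spanPQ, mem_spanPQ, mem_spanPQ]
  constructor
  · rintro ⟨h1, h2⟩ j hj
    by_cases hcase : j.val < n - k
    · exact h2 j (by simp only [pqOK] at hj ⊢; omega)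
    · exact h1 j (by simp only [pqOK] at hj ⊢; omega)
  · intro h
    exact ⟨fun j hj => by
        by_cases hcase : j.val < n - k
        · exact h j (by simp only [pqOK]; omega)
        · exact h j (by simp only [pqOK] at hj ⊢; omega),
      fun j hj => h j (by simp only [pqOK] at hj ⊢; omega)⟩

lemma spanPQ_sup {t b : ℕ} : spanPQ n k t 0 ⊔ spanPQ n k 0 b = spanPQ n k t b := by
  apply le_antisymm
  · exact sup_le (spanPQ_mono le_rfl (Nat.zero_le _)) (spanPQ_mono (Nat.zero_le _) le_rfl)
  · rw [spanPQ, Submodule.span_le]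
    rintro x ⟨j, hj, rfl⟩
    rcases hj with hj | hj
    · exact Submodule.mem_sup_left (single_mem_spanPQ (Or.inl hj))
    · exact Submodule.mem_sup_right (single_mem_spanPQ (Or.inr hj))

lemma Npow_single (d : ℕ) (j : Fin n) :
    ((Nmap n k) ^ d) (Pi.single j 1 : Fin n → ℂ) =
      if h : d ≤ j.val ∧ (j.val < n - k ∨ n - k ≤ j.val - d) then
        (Pi.single (⟨j.val - d, by have := j.isLt; omega⟩ : Fin n) 1 : Fin n → ℂ) else 0 := by
  by_cases hh : d ≤ j.val ∧ (j.val < n - k ∨ n - k ≤ j.val - d)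
  · rw [dif_pos hh]
    funext l
    rw [Npow_apply]
    by_cases hc : l.val + d < n - k ∨ (n - k ≤ l.val ∧ l.val + d < n)
    · rw [dif_pos hc]
      by_cases he : l.val + d = j.val
      · have h1 : (⟨l.val + d, by have := j.isLt; omega⟩ : Fin n) = j := Fin.ext he
        have h2 : l = (⟨j.val - d, by have := j.isLt; omega⟩ : Fin n) := Fin.ext (by simp; omega)
        rw [h1, Pi.single_eq_same, h2, Pi.single_eq_same]
      · rw [Pi.single_eq_of_ne (fun e => he (congrArg Fin.val e)),
          Pi.single_eq_of_ne (fun e => he (by have := congrArg Fin.val e; simp at this; omega))]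
    · rw [dif_neg hc]
      symm
      apply Pi.single_eq_of_ne
      intro e
      have hv : l.val = j.val - d := congrArg Fin.val e
      exact hc (by have := j.isLt; omega)
  · rw [dif_neg hh]
    funext l
    rw [Npow_apply]
    by_cases hc : l.val + d < n - k ∨ (n - k ≤ l.val ∧ l.val + d < n)
    · rw [dif_pos hc]
      refine Pi.single_eq_of_ne (fun e => ?_) 1
      have hv : l.val + d = j.val := congrArg Fin.val e
      exact hh (by omega)
    · rw [dif_neg hc]; rfl

lemma map_pow_spanPQ (hk : k ≤ n) (d : ℕ) {t b : ℕ} (ht : t ≤ n - k) (hb : b ≤ k) :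
    Submodule.map ((Nmap n k) ^ d) (spanPQ n k t b) = spanPQ n k (t - d) (b - d) := by
  rw [spanPQ, Submodule.map_span]
  apply le_antisymm
  · rw [Submodule.span_le]
    rintro y ⟨x, ⟨j, hj, rfl⟩, rfl⟩
    rw [SetLike.mem_coe, Npow_single]
    by_cases hh : d ≤ j.val ∧ (j.val < n - k ∨ n - k ≤ j.val - d)
    · rw [dif_pos hh]
      exact single_mem_spanPQ (by simp only [pqOK, Fin.val_mk]; omega)
    · rw [dif_neg hh]
      exact Submodule.zero_mem _
  · rw [spanPQ, Submodule.span_le]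
    rintro y ⟨l, hl, rfl⟩
    rw [SetLike.mem_coe]
    have hln : l.val + d < n := by rcases hl with hl | hl <;> omega
    refine Submodule.subset_span ⟨Pi.single (⟨l.val + d, hln⟩ : Fin n) 1,
      ⟨⟨l.val + d, hln⟩, by simp only [Fin.val_mk]; omega, rfl⟩, ?_⟩
    rw [Npow_single, dif_pos (by simp only [Fin.val_mk]; omega)]
    exact congrArg (fun i : Fin n => (Pi.single i 1 : Fin n → ℂ))
      (Fin.ext (by simp only [Fin.val_mk]; omega))

lemma comap_pow_spanPQ (d : ℕ) {A B : ℕ} (hA : A ≤ n - k) (hB : B ≤ k) :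
    Submodule.comap ((Nmap n k) ^ d) (spanPQ n k A B) =
      spanPQ n k (min (n - k) (A + d)) (min k (B + d)) := by
  ext x
  rw [Submodule.mem_comap, mem_spanPQ, mem_spanPQ]
  constructor
  · intro h l hl
    by_cases hcase : l.val < n - k
    · have hld : A + d ≤ l.val := by simp only [pqOK] at hl; omega
      have hjn : l.val - d < n := by omega
      have h2 := h ⟨l.val - d, hjn⟩ (by simp only [pqOK, Fin.val_mk]; omega)
      rw [Npow_apply, dif_pos (by simp only [Fin.val_mk]; omega)] at h2
      rwa [show (⟨(⟨l.val - d, hjn⟩ : Fin n).val + d, by simp; omega⟩ : Fin n) = l from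
        Fin.ext (by simp; omega)] at h2
    · have hld : n - k + B + d ≤ l.val := by
        simp only [pqOK] at hl; have := l.isLt; omega
      have hjn : l.val - d < n := by omega
      have h2 := h ⟨l.val - d, hjn⟩ (by simp only [pqOK, Fin.val_mk]; omega)
      rw [Npow_apply, dif_pos (by simp only [Fin.val_mk]; omega)] at h2
      rwa [show (⟨(⟨l.val - d, hjn⟩ : Fin n).val + d, by simp; omega⟩ : Fin n) = l from
        Fin.ext (by simp; omega)] at h2
  · intro h j hj
    rw [Npow_apply]
    by_cases hc : j.val + d < n - k ∨ (n - k ≤ j.val ∧ j.val + d < n)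
    · rw [dif_pos hc]
      refine h _ ?_
      simp only [pqOK, Fin.val_mk] at hj ⊢
      omega
    · rw [dif_neg hc]

lemma range_pow_spanPQ (hk : k ≤ n) (s : ℕ) :
    LinearMap.range ((Nmap n k) ^ s) = spanPQ n k (n - k - s) (k - s) := by
  rw [LinearMap.range_eq_map, ← spanPQ_top hk, map_pow_spanPQ hk s le_rfl le_rfl]

lemma inv_block (o s : ℕ) (ho : o = 0 ∨ o = n - k) (hos : o + s ≤ n)
    (hs : o = 0 → s ≤ n - k) (W : Submodule ℂ (Fin n → ℂ))
    (hsupp : ∀ x ∈ W, ∀ j : Fin n, ¬ (o ≤ j.val ∧ j.val < o + s) → x j = 0)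
    (hinv : ∀ x ∈ W, Nmap n k x ∈ W) :
    ∃ m, m ≤ s ∧ (∀ x ∈ W, ∀ j : Fin n, ¬ (o ≤ j.val ∧ j.val < o + m) → x j = 0) ∧
      (∀ j : Fin n, o ≤ j.val → j.val < o + m → (Pi.single j 1 : Fin n → ℂ) ∈ W) := by
  classical
  have hNr : ∀ (r : ℕ) (x : Fin n → ℂ), x ∈ W → ((Nmap n k) ^ r) x ∈ W := by
    intro r
    induction r with
    | zero => intro x hx; simpa using hx
    | succ r ih =>
      intro x hx
      have : ((Nmap n k) ^ (r + 1)) x = ((Nmap n k) ^ r) (Nmap n k x) := by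
        rw [pow_succ, Module.End.mul_apply]
      rw [this]
      exact ih _ (hinv x hx)
  set D := Finset.univ.filter
    (fun j : Fin n => o ≤ j.val ∧ j.val < o + s ∧ ∃ x ∈ W, x j ≠ 0) with hD
  rcases Finset.eq_empty_or_nonempty D with hDe | hne
  · refine ⟨0, Nat.zero_le _, ?_, ?_⟩
    · intro x hx j _
      by_cases hj : o ≤ j.val ∧ j.val < o + s
      · by_contra hxj
        have : j ∈ D := Finset.mem_filter.2 ⟨Finset.mem_univ _, hj.1, hj.2, x, hx, hxj⟩
        rw [hDe] at this
        exact absurd this (Finset.notMem_empty j)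
      · exact hsupp x hx j hj
    · intro j h1 h2; omega
  · have hj0mem := D.max'_mem hne
    rw [Finset.mem_filter] at hj0mem
    set j0 := D.max' hne with hj0def
    obtain ⟨-, hoj0, hj0s, x, hxW, hxj0⟩ := hj0mem
    have hcoordzero : ∀ z ∈ W, ∀ l : Fin n, j0.val < l.val → z l = 0 := by
      intro z hz l hl
      by_cases hjl : o ≤ l.val ∧ l.val < o + s
      · by_contra hne0
        have hmem : l ∈ D := Finset.mem_filter.2 ⟨Finset.mem_univ _, hjl.1, hjl.2, z, hz, hne0⟩
        have := Finset.le_max' D l hmem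
        rw [← hj0def] at this
        rw [Fin.le_def] at this
        omega
      · exact hsupp z hz l hjl
    have key : ∀ dd : ℕ, ∀ d : Fin n, o ≤ d.val → d.val ≤ j0.val → d.val = o + dd →
        (Pi.single d 1 : Fin n → ℂ) ∈ W := by
      intro dd
      induction dd using Nat.strong_induction_on with
      | _ dd ih =>
        intro d hod hdj0 hdd
        set r := j0.val - d.val with hr
        set y := ((Nmap n k) ^ r) x with hy
        have hyW : y ∈ W := hNr r x hxW
        have hcond : d.val + r < n - k ∨ (n - k ≤ d.val ∧ d.val + r < n) := by
          rcases ho with h0 | h0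
          · have hsn := hs h0; omega
          · omega
        have hyd : y d = x j0 := by
          rw [hy, Npow_apply, dif_pos hcond]
          congr 1
          exact Fin.ext (by simp only [Fin.val_mk]; omega)
        have hye : ∀ e : Fin n, d.val < e.val → y e = 0 := by
          intro e he
          rw [hy, Npow_apply]
          by_cases hc : e.val + r < n - k ∨ (n - k ≤ e.val ∧ e.val + r < n)
          · rw [dif_pos hc]
            exact hcoordzero x hxW _ (by simp only [Fin.val_mk]; omega)
          · rw [dif_neg hc]
        have hylow : ∀ l : Fin n, l.val < o → y l = 0 := by
          intro l hl
          rw [hy, Npow_apply]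
          by_cases hc : l.val + r < n - k ∨ (n - k ≤ l.val ∧ l.val + r < n)
          · rw [dif_pos hc]
            refine hsupp x hxW _ ?_
            simp only [Fin.val_mk]
            rcases ho with h0 | h0 <;> omega
          · rw [dif_neg hc]
        set z := ∑ e ∈ Finset.univ.filter (fun e : Fin n => o ≤ e.val ∧ e.val < o + dd),
          y e • (Pi.single e 1 : Fin n → ℂ) with hz
        have hzW : z ∈ W := by
          refine Submodule.sum_mem _ (fun e he => Submodule.smul_mem _ _ ?_)
          rw [Finset.mem_filter] at he
          exact ih (e.val - o) (by omega) e (by omega) (by omega) (by omega)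
        have hzl : ∀ l : Fin n, z l = if o ≤ l.val ∧ l.val < o + dd then y l else 0 := by
          intro l
          rw [hz, Finset.sum_apply]
          by_cases hl : o ≤ l.val ∧ l.val < o + dd
          · rw [if_pos hl, Finset.sum_eq_single l]
            · simp
            · intro e _ hne
              simp [Pi.single_eq_of_ne (Ne.symm hne)]
            · intro hl'
              exact absurd (Finset.mem_filter.2 ⟨Finset.mem_univ l, hl⟩) hl'
          · rw [if_neg hl, Finset.sum_eq_zero]
            intro e he
            rw [Finset.mem_filter] at he
            have hne : l ≠ e := by
              intro hle; rw [hle] at hl; exact hl he.2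
            simp [Pi.single_eq_of_ne hne]
        have hkey : (Pi.single d 1 : Fin n → ℂ) = (x j0)⁻¹ • (y - z) := by
          funext l
          simp only [Pi.smul_apply, Pi.sub_apply, smul_eq_mul]
          by_cases hld : l = d
          · subst hld
            rw [Pi.single_eq_same, hyd, hzl, if_neg (by omega)]
            rw [sub_zero, inv_mul_cancel₀ hxj0]
          · rw [Pi.single_eq_of_ne hld]
            have hlv : l.val ≠ d.val := fun h => hld (Fin.ext h)
            rw [hzl]
            by_cases hl : o ≤ l.val ∧ l.val < o + dd
            · rw [if_pos hl, sub_self, mul_zero]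
            · rw [if_neg hl, sub_zero]
              rcases Nat.lt_or_ge l.val o with hc | hc
              · rw [hylow l hc, mul_zero]
              · rw [hye l (by omega), mul_zero]
        rw [hkey]
        exact Submodule.smul_mem _ _ (Submodule.sub_mem _ hyW hzW)
    refine ⟨j0.val - o + 1, by omega, ?_, ?_⟩
    · intro w hw j hj
      by_cases hjs : o ≤ j.val ∧ j.val < o + s
      · exact hcoordzero w hw j (by omega)
      · exact hsupp w hw j hjs
    · intro j h1 h2
      exact key (j.val - o) j h1 (by omega) (by omega)

lemma exists_param_P (hk : k ≤ n) {W : Submodule ℂ (Fin n → ℂ)} (hW : W ≤ Pmod n k)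
    (hinv : ∀ x ∈ W, Nmap n k x ∈ W) : ∃ m, m ≤ n - k ∧ W = spanPQ n k m 0 := by
  obtain ⟨m, hm, hsupp, hsing⟩ := inv_block 0 (n - k) (Or.inl rfl) (by omega)
    (fun _ => le_rfl) W
    (by
      intro x hx j hj
      have := (mem_spanPQ x).1 (hW hx) j
      exact this (by simp only [pqOK]; omega))
    hinv
  refine ⟨m, hm, le_antisymm ?_ ?_⟩
  · intro x hx
    rw [mem_spanPQ]
    intro j hj
    exact hsupp x hx j (by simp only [pqOK] at hj; omega)
  · rw [spanPQ, Submodule.span_le]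
    rintro y ⟨j, hj, rfl⟩
    exact hsing j (by omega) (by omega)

lemma exists_param_Q (hk2 : 2 * k ≤ n) {W : Submodule ℂ (Fin n → ℂ)} (hW : W ≤ Qmod n k)
    (hinv : ∀ x ∈ W, Nmap n k x ∈ W) : ∃ m, m ≤ k ∧ W = spanPQ n k 0 m := by
  obtain ⟨m, hm, hsupp, hsing⟩ := inv_block (n - k) k (Or.inr rfl) (by omega)
    (by intro h0; omega) W
    (by
      intro x hx j hj
      have := (mem_spanPQ x).1 (hW hx) j
      exact this (by simp only [pqOK]; omega))
    hinv
  refine ⟨m, hm, le_antisymm ?_ ?_⟩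
  · intro x hx
    rw [mem_spanPQ]
    intro j hj
    exact hsupp x hx j (by simp only [pqOK] at hj; omega)
  · rw [spanPQ, Submodule.span_le]
    rintro y ⟨j, hj, rfl⟩
    exact hsing j (by omega) (by omega)

lemma card_filter_lt (m : ℕ) :
    (Finset.univ.filter fun j : Fin n => j.val < m).card = min m n := by
  rw [card_filter_val (fun j => j < m)]
  have : (Finset.range n).filter (fun j => j < m) = Finset.range (min m n) := by
    ext j; simp only [Finset.mem_filter, Finset.mem_range]; omega
  rw [this, Finset.card_range]

lemma filter_and_card (w : Fin n → Bool) (P : Fin n → Prop) [DecidablePred P] :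
    (Finset.univ.filter fun j : Fin n => P j ∧ w j = false).card +
    (Finset.univ.filter fun j : Fin n => P j ∧ w j = true).card =
    (Finset.univ.filter fun j : Fin n => P j).card := by
  classical
  rw [← Finset.card_union_of_disjoint]
  · congr 1
    ext j
    simp only [Finset.mem_union, Finset.mem_filter, Finset.mem_univ, true_and]
    rcases Bool.eq_false_or_eq_true (w j) with h | h <;> simp [h]
  · rw [Finset.disjoint_left]
    intro j h1 h2
    simp only [Finset.mem_filter] at h1 h2
    rw [h1.2.2] at h2
    exact absurd h2.2.2 (by simp)

lemma tcount_add_bcount (w : Fin n → Bool) (m : ℕ) :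
    tcount n w m + bcount n w m = min m n := by
  rw [tcount, bcount, filter_and_card w (fun j : Fin n => j.val < m), card_filter_lt]

/-- Count of positions `a ≤ i ≤ b` (1-based) where `w` takes value `v`. -/
def cnt (w : Fin n → Bool) (v : Bool) (a b : ℕ) : ℕ :=
  (Finset.univ.filter fun j : Fin n => a ≤ j.val + 1 ∧ j.val + 1 ≤ b ∧ w j = v).card

lemma cnt_split (w : Fin n → Bool) (v : Bool) {a c b : ℕ} (hac : a ≤ c + 1) (hcb : c ≤ b) :
    cnt w v a b = cnt w v a c + cnt w v (c + 1) b := by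
  classical
  rw [cnt, cnt, cnt, ← Finset.card_union_of_disjoint]
  · congr 1
    ext j
    simp only [Finset.mem_union, Finset.mem_filter, Finset.mem_univ, true_and]
    constructor
    · rintro ⟨h1, h2, h3⟩
      rcases le_or_gt (j.val + 1) c with h | h
      · exact Or.inl ⟨h1, h, h3⟩
      · exact Or.inr ⟨by omega, h2, h3⟩
    · rintro (⟨h1, h2, h3⟩ | ⟨h1, h2, h3⟩)
      · exact ⟨h1, by omega, h3⟩
      · exact ⟨by omega, h2, h3⟩
  · rw [Finset.disjoint_left]
    intro j h1 h2
    simp only [Finset.mem_filter] at h1 h2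
    omega

lemma cnt_empty (w : Fin n → Bool) (v : Bool) {a b : ℕ} (hab : b < a) : cnt w v a b = 0 := by
  rw [cnt, Finset.card_eq_zero, Finset.filter_eq_empty_iff]
  rintro j - ⟨h1, h2, h3⟩
  omega

lemma bcount_eq_cnt (w : Fin n → Bool) (m : ℕ) : bcount n w m = cnt w true 1 m := by
  rw [bcount, cnt]
  congr 1
  ext j
  simp only [Finset.mem_filter, Finset.mem_univ, true_and]
  constructor
  · rintro ⟨h1, h2⟩
    exact ⟨by omega, by omega, h2⟩
  · rintro ⟨h1, h2, h3⟩
    exact ⟨by omega, h3⟩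

lemma tcount_eq_cnt (w : Fin n → Bool) (m : ℕ) : tcount n w m = cnt w false 1 m := by
  rw [tcount, cnt]
  congr 1
  ext j
  simp only [Finset.mem_filter, Finset.mem_univ, true_and]
  constructor
  · rintro ⟨h1, h2⟩
    exact ⟨by omega, by omega, h2⟩
  · rintro ⟨h1, h2, h3⟩
    exact ⟨by omega, h3⟩

lemma cnt_single (w : Fin n → Bool) (v : Bool) {m : ℕ} (h1 : 1 ≤ m) (hn : m ≤ n) :
    cnt w v m m = if w ⟨m - 1, by omega⟩ = v then 1 else 0 := by
  classical
  by_cases hw : w ⟨m - 1, by omega⟩ = v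
  · rw [if_pos hw, cnt]
    have hset : (Finset.univ.filter fun j : Fin n => m ≤ j.val + 1 ∧ j.val + 1 ≤ m ∧ w j = v) =
        {(⟨m - 1, by omega⟩ : Fin n)} := by
      ext j
      simp only [Finset.mem_filter, Finset.mem_univ, true_and, Finset.mem_singleton]
      constructor
      · rintro ⟨h2, h3, h4⟩
        exact Fin.ext (by simp only [Fin.val_mk]; omega)
      · rintro rfl
        refine ⟨by simp only [Fin.val_mk]; omega, by simp only [Fin.val_mk]; omega, hw⟩
    rw [hset, Finset.card_singleton]
  · rw [if_neg hw, cnt, Finset.card_eq_zero, Finset.filter_eq_empty_iff]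
    rintro j - ⟨h2, h3, h4⟩
    have hje : j = (⟨m - 1, by omega⟩ : Fin n) := Fin.ext (by simp only [Fin.val_mk]; omega)
    rw [hje] at h4
    exact hw h4

lemma cnt_total (w : Fin n → Bool) {a b : ℕ} (h1 : 1 ≤ a) (hb : b ≤ n) :
    cnt w true a b + cnt w false a b = b + 1 - a := by
  classical
  have hassoc : ∀ v : Bool, (Finset.univ.filter fun j : Fin n => a ≤ j.val + 1 ∧ j.val + 1 ≤ b ∧ w j = v) =
      (Finset.univ.filter fun j : Fin n => (a ≤ j.val + 1 ∧ j.val + 1 ≤ b) ∧ w j = v) := by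
    intro v
    ext j
    simp only [Finset.mem_filter, Finset.mem_univ, true_and, and_assoc]
  rw [cnt, cnt, Nat.add_comm, hassoc true, hassoc false,
    filter_and_card w (fun j : Fin n => a ≤ j.val + 1 ∧ j.val + 1 ≤ b)]
  have e1 : (Finset.univ.filter fun j : Fin n => a ≤ j.val + 1 ∧ j.val + 1 ≤ b).card =
      ((Finset.range n).filter fun j => a ≤ j + 1 ∧ j + 1 ≤ b).card :=
    card_filter_val (fun j => a ≤ j + 1 ∧ j + 1 ≤ b)
  have e2 : ((Finset.range n).filter fun j => a ≤ j + 1 ∧ j + 1 ≤ b) = Finset.Ico (a - 1) b := by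
    ext j
    simp only [Finset.mem_filter, Finset.mem_range, Finset.mem_Ico]
    omega
  rw [e1, e2, Nat.card_Ico]
  omega

lemma bcount_split (w : Fin n → Bool) {a b : ℕ} (h1 : 1 ≤ a) (hab : a ≤ b + 1) :
    bcount n w b = bcount n w (a - 1) + cnt w true a b := by
  rw [bcount_eq_cnt, bcount_eq_cnt]
  rw [show a = (a - 1) + 1 from by omega] at hab ⊢
  exact cnt_split w true (by omega) (by omega)

lemma tcount_split (w : Fin n → Bool) {a b : ℕ} (h1 : 1 ≤ a) (hab : a ≤ b + 1) :
    tcount n w b = tcount n w (a - 1) + cnt w false a b := by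
  rw [tcount_eq_cnt, tcount_eq_cnt]
  rw [show a = (a - 1) + 1 from by omega] at hab ⊢
  exact cnt_split w false (by omega) (by omega)

lemma bcount_mono (w : Fin n → Bool) {a b : ℕ} (h : a ≤ b) : bcount n w a ≤ bcount n w b := by
  apply Finset.card_le_card
  intro j hj
  simp only [bcount, Finset.mem_filter] at hj ⊢
  exact ⟨hj.1, by omega, hj.2.2⟩

lemma tcount_mono (w : Fin n → Bool) {a b : ℕ} (h : a ≤ b) : tcount n w a ≤ tcount n w b := by
  apply Finset.card_le_card
  intro j hj
  simp only [tcount, Finset.mem_filter] at hj ⊢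
  exact ⟨hj.1, by omega, hj.2.2⟩

lemma bcount_of_ge (w : Fin n → Bool) {m : ℕ} (h : n ≤ m) : bcount n w m = bcount n w n := by
  rw [bcount, bcount]
  congr 1
  ext j
  simp only [Finset.mem_filter, Finset.mem_univ, true_and]
  have := j.isLt
  constructor
  · rintro ⟨h1, h2⟩; exact ⟨by omega, h2⟩
  · rintro ⟨h1, h2⟩; exact ⟨by omega, h2⟩

lemma tcount_of_ge (w : Fin n → Bool) {m : ℕ} (h : n ≤ m) : tcount n w m = tcount n w n := by
  rw [tcount, tcount]
  congr 1
  ext j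
  simp only [Finset.mem_filter, Finset.mem_univ, true_and]
  have := j.isLt
  constructor
  · rintro ⟨h1, h2⟩; exact ⟨by omega, h2⟩
  · rintro ⟨h1, h2⟩; exact ⟨by omega, h2⟩

lemma isWeightSeq_iff (w : Fin n → Bool) : IsWeightSeq n k w ↔ bcount n w n = k := by
  rw [IsWeightSeq, bcount]
  have : (Finset.univ.filter fun j : Fin n => j.val < n ∧ w j = true) =
      (Finset.univ.filter fun i : Fin n => w i = true) := by
    ext j
    simp only [Finset.mem_filter, Finset.mem_univ, true_and]
    exact ⟨fun h => h.2, fun h => ⟨j.isLt, h⟩⟩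
  rw [this]

lemma bcount_le (w : Fin n → Bool) (hw : IsWeightSeq n k w) (m : ℕ) : bcount n w m ≤ k := by
  rcases le_or_gt m n with h | h
  · exact le_trans (bcount_mono w h) (le_of_eq ((isWeightSeq_iff w).1 hw))
  · rw [bcount_of_ge w h.le]
    exact le_of_eq ((isWeightSeq_iff w).1 hw)

lemma tcount_le (hk : k ≤ n) (w : Fin n → Bool) (hw : IsWeightSeq n k w) (m : ℕ) :
    tcount n w m ≤ n - k := by
  have h2 := tcount_add_bcount w n
  have h3 := (isWeightSeq_iff w).1 hw
  have h4 : tcount n w m ≤ tcount n w n := by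
    rcases le_or_gt m n with h | h
    · exact tcount_mono w h
    · exact le_of_eq (tcount_of_ge w h.le)
  omega

lemma cup_unique {C : CrossinglessMatching n} {q q' : ℕ × ℕ} {m : ℕ}
    (hq : q ∈ C.cups) (hq' : q' ∈ C.cups)
    (hm : m = q.1 ∨ m = q.2) (hm' : m = q'.1 ∨ m = q'.2) : q = q' := by
  by_contra hne
  have hd := C.disjoint' q hq q' hq' hne
  rcases hm with rfl | rfl <;> rcases hm' with h | h <;> omega

lemma cup_inside {C : CrossinglessMatching n} {p q : ℕ × ℕ} {m : ℕ}
    (hp : p ∈ C.cups) (hq : q ∈ C.cups) (hm : m = q.1 ∨ m = q.2)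
    (h1 : p.1 < m) (h2 : m < p.2) : p.1 < q.1 ∧ q.2 < p.2 := by
  have hpb := C.mem_range p hp
  have hqb := C.mem_range q hq
  have hpq : p ≠ q := by
    rintro rfl
    rcases hm with h | h <;> omega
  have hd := C.disjoint' p hp q hq hpq
  rcases hm with rfl | rfl
  · have hnc := C.noncross p hp q hq
    constructor
    · omega
    · by_contra hc
      exact hnc ⟨by omega, by omega, by omega⟩
  · have hnc := C.noncross q hq p hp
    constructor
    · by_contra hc
      exact hnc ⟨by omega, by omega, by omega⟩
    · omega

/-- Every point of `[a, b]` is matched within `[a, b]`. -/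
def ClosedIv (C : CrossinglessMatching n) (a b : ℕ) : Prop :=
  ∀ m, a ≤ m → m ≤ b → ∃ q ∈ C.cups, (m = q.1 ∨ m = q.2) ∧ a ≤ q.1 ∧ q.2 ≤ b

lemma cup_closed {C : CrossinglessMatching n} {p : ℕ × ℕ} (hp : p ∈ C.cups) :
    ClosedIv C p.1 p.2 := by
  intro m h1 h2
  have hpb := C.mem_range p hp
  rcases eq_or_lt_of_le h1 with rfl | hlt
  · exact ⟨p, hp, Or.inl rfl, le_rfl, le_rfl⟩
  rcases eq_or_lt_of_le h2 with rfl | hlt2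
  · exact ⟨p, hp, Or.inr rfl, le_rfl, le_rfl⟩
  obtain ⟨q, hq, hmq⟩ := C.rays_outside p hp m hlt hlt2
  have := cup_inside hp hq hmq hlt hlt2
  exact ⟨q, hq, hmq, by omega, by omega⟩

lemma interior_closed {C : CrossinglessMatching n} {p : ℕ × ℕ} (hp : p ∈ C.cups) :
    ClosedIv C (p.1 + 1) (p.2 - 1) := by
  intro m h1 h2
  have hpb := C.mem_range p hp
  obtain ⟨q, hq, hmq⟩ := C.rays_outside p hp m (by omega) (by omega)
  have := cup_inside hp hq hmq (by omega) (by omega)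
  exact ⟨q, hq, hmq, by omega, by omega⟩

lemma closed_split {C : CrossinglessMatching n} {a b : ℕ}
    (hC : ClosedIv C a b) (hab : a ≤ b) :
    ∃ c, (a, c) ∈ C.cups ∧ a < c ∧ c ≤ b ∧ ClosedIv C (c + 1) b := by
  obtain ⟨q, hq, hm, hq1, hq2⟩ := hC a le_rfl hab
  have hqb := C.mem_range q hq
  have ha1 : a = q.1 := by rcases hm with h | h <;> omega
  have hq' : (a, q.2) ∈ C.cups := by
    have : q = (a, q.2) := by rw [ha1]
    rwa [← this]
  refine ⟨q.2, hq', by omega, hq2, ?_⟩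
  intro m hm1 hm2
  obtain ⟨r, hr, hmr, hr1, hr2⟩ := hC m (by omega) hm2
  have hrb := C.mem_range r hr
  refine ⟨r, hr, hmr, ?_, hr2⟩
  by_contra hc
  push_neg at hc
  have hrq : r ≠ q := by
    rintro rfl
    rcases hmr with h | h <;> omega
  have hd := C.disjoint' r hr q hq hrq
  have hr1q : a < r.1 ∧ r.1 < q.2 := by omega
  have := cup_inside hq hr (Or.inl rfl) (by omega) (by omega)
  rcases hmr with h | h <;> omega

lemma matched_straddle {C : CrossinglessMatching n} {q : ℕ × ℕ} {m : ℕ}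
    (hq : q ∈ C.cups) (hm : ¬ Matched n C m) (h1 : q.1 ≤ m) : q.2 < m := by
  have hqb := C.mem_range q hq
  have hne1 : q.1 ≠ m := fun h => hm ⟨q, hq, Or.inl h.symm⟩
  have hne2 : q.2 ≠ m := fun h => hm ⟨q, hq, Or.inr h.symm⟩
  by_contra hc
  push_neg at hc
  obtain ⟨r, hr, hmr⟩ := C.rays_outside q hq m (by omega) (by omega)
  exact hm ⟨r, hr, hmr⟩

lemma two_mul_card_cups_le {C : CrossinglessMatching n} {a b : ℕ} (ha : 1 ≤ a) :
    2 * (C.cups.filter fun q => a ≤ q.1 ∧ q.2 ≤ b).card ≤ b + 1 - a := by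
  classical
  set F := C.cups.filter (fun q => a ≤ q.1 ∧ q.2 ≤ b) with hF
  have hdisj : ∀ q ∈ F, ∀ q' ∈ F, q ≠ q' →
      Disjoint ({q.1, q.2} : Finset ℕ) ({q'.1, q'.2} : Finset ℕ) := by
    intro q hq q' hq' hne
    have hd := C.disjoint' q (Finset.mem_filter.1 hq).1 q' (Finset.mem_filter.1 hq').1 hne
    rw [Finset.disjoint_left]
    intro x hx hx'
    simp only [Finset.mem_insert, Finset.mem_singleton] at hx hx'
    rcases hx with rfl | rfl <;> rcases hx' with h | h <;> omega
  have hcards : (F.biUnion fun q => ({q.1, q.2} : Finset ℕ)).card = 2 * F.card := by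
    rw [Finset.card_biUnion hdisj]
    rw [Finset.sum_congr rfl (fun q hq => ?_), Finset.sum_const, smul_eq_mul, Nat.mul_comm]
    have hqb := C.mem_range q (Finset.mem_filter.1 hq).1
    rw [Finset.card_insert_of_notMem (by simp; omega), Finset.card_singleton]
  have hsub : (F.biUnion fun q => ({q.1, q.2} : Finset ℕ)) ⊆ Finset.Icc a b := by
    intro x hx
    rw [Finset.mem_biUnion] at hx
    obtain ⟨q, hq, hxq⟩ := hx
    rw [Finset.mem_filter] at hq
    have hqb := C.mem_range q hq.1
    simp only [Finset.mem_insert, Finset.mem_singleton] at hxq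
    rw [Finset.mem_Icc]
    rcases hxq with rfl | rfl <;> omega
  have := Finset.card_le_card hsub
  rw [hcards, Nat.card_Icc] at this
  omega

lemma cnt_single' (w : Fin n → Bool) (v : Bool) {m : ℕ} (j : Fin n) (hj : j.val + 1 = m) :
    cnt w v m m = if w j = v then 1 else 0 := by
  have h1 : 1 ≤ m := by omega
  have hn : m ≤ n := by have := j.isLt; omega
  have hje : (⟨m - 1, by omega⟩ : Fin n) = j := Fin.ext (by simp only [Fin.val_mk]; omega)
  rw [cnt_single w v h1 hn, hje]

lemma tiling_fwd {C : CrossinglessMatching n} (w : Fin n → Bool)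
    (Hop : ∀ p ∈ C.cups, ∀ (h1 : p.1 - 1 < n) (h2 : p.2 - 1 < n),
      w ⟨p.1 - 1, h1⟩ ≠ w ⟨p.2 - 1, h2⟩) :
    ∀ L a b, b + 1 - a ≤ L → 1 ≤ a → b ≤ n → ClosedIv C a b →
      2 * cnt w true a b = b + 1 - a ∧ 2 * cnt w false a b = b + 1 - a := by
  intro L
  induction L with
  | zero =>
    intro a b hL h1 hb _
    rw [cnt_empty w true (by omega), cnt_empty w false (by omega)]
    omega
  | succ L ih =>
    intro a b hL h1 hb hC
    rcases le_or_gt a b with hab | hab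
    · obtain ⟨c, hcup, hac, hcb, hC'⟩ := closed_split hC hab
      have pa : a - 1 < n := by omega
      have pc : c - 1 < n := by omega
      have hne : w ⟨a - 1, pa⟩ ≠ w ⟨c - 1, pc⟩ := Hop (a, c) hcup pa pc
      have hint : ClosedIv C (a + 1) (c - 1) := interior_closed hcup
      have hIH1 := ih (a + 1) (c - 1) (by omega) (by omega) (by omega) hint
      have hIH2 := ih (c + 1) b (by omega) (by omega) hb hC'
      have hends : ∀ v : Bool, cnt w v a a + cnt w v c c = 1 := by
        intro v
        rw [cnt_single' w v ⟨a - 1, pa⟩ (by simp only [Fin.val_mk]; omega),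
          cnt_single' w v ⟨c - 1, pc⟩ (by simp only [Fin.val_mk]; omega)]
        rcases Bool.eq_false_or_eq_true (w ⟨a - 1, pa⟩) with hx | hx <;>
          rcases Bool.eq_false_or_eq_true (w ⟨c - 1, pc⟩) with hy | hy
        · exact absurd (hx.trans hy.symm) hne
        · rw [hx, hy]; cases v <;> simp
        · rw [hx, hy]; cases v <;> simp
        · exact absurd (hx.trans hy.symm) hne
      have hsplit : ∀ v : Bool, cnt w v a b =
          cnt w v a a + cnt w v (a + 1) (c - 1) + cnt w v c c + cnt w v (c + 1) b := by
        intro v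
        rw [cnt_split w v (show a ≤ c + 1 by omega) (show c ≤ b from hcb),
          cnt_split w v (show a ≤ a + 1 by omega) (show a ≤ c by omega),
          cnt_split w v (show a + 1 ≤ (c - 1) + 1 by omega) (show c - 1 ≤ c by omega),
          show c - 1 + 1 = c from by omega]
        omega
      have ht := hsplit true
      have hf := hsplit false
      have he1 := hends true
      have he2 := hends false
      omega
    · rw [cnt_empty w true hab, cnt_empty w false hab]
      omega

lemma cup_cnt_fwd {C : CrossinglessMatching n} (w : Fin n → Bool)
    (Hop : ∀ p ∈ C.cups, ∀ (h1 : p.1 - 1 < n) (h2 : p.2 - 1 < n),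
      w ⟨p.1 - 1, h1⟩ ≠ w ⟨p.2 - 1, h2⟩) {p : ℕ × ℕ} (hp : p ∈ C.cups) :
    2 * cnt w true p.1 p.2 = p.2 + 1 - p.1 ∧ 2 * cnt w false p.1 p.2 = p.2 + 1 - p.1 := by
  have hpb := C.mem_range p hp
  exact tiling_fwd w Hop (p.2 + 1) p.1 p.2 (by omega) (by omega) (by omega) (cup_closed hp)

lemma tiling_bwd {C : CrossinglessMatching n} (w : Fin n → Bool)
    (Hcup : ∀ p ∈ C.cups, 2 * cnt w true p.1 p.2 = p.2 + 1 - p.1 ∧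
      2 * cnt w false p.1 p.2 = p.2 + 1 - p.1) :
    ∀ L a b, b + 1 - a ≤ L → 1 ≤ a → b ≤ n → ClosedIv C a b →
      2 * cnt w true a b = b + 1 - a ∧ 2 * cnt w false a b = b + 1 - a := by
  intro L
  induction L with
  | zero =>
    intro a b hL h1 hb _
    rw [cnt_empty w true (by omega), cnt_empty w false (by omega)]
    omega
  | succ L ih =>
    intro a b hL h1 hb hC
    rcases le_or_gt a b with hab | hab
    · obtain ⟨c, hcup, hac, hcb, hC'⟩ := closed_split hC hab
      have hc := Hcup (a, c) hcup
      have hIH := ih (c + 1) b (by omega) (by omega) hb hC'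
      have hs1 := cnt_split w true (show a ≤ c + 1 by omega) (show c ≤ b from hcb)
      have hs2 := cnt_split w false (show a ≤ c + 1 by omega) (show c ≤ b from hcb)
      simp only at hc
      omega
    · rw [cnt_empty w true hab, cnt_empty w false hab]
      omega

lemma cup_opposite_bwd {C : CrossinglessMatching n} (w : Fin n → Bool)
    (Hcup : ∀ p ∈ C.cups, 2 * cnt w true p.1 p.2 = p.2 + 1 - p.1 ∧
      2 * cnt w false p.1 p.2 = p.2 + 1 - p.1)
    {p : ℕ × ℕ} (hp : p ∈ C.cups) (h1 : p.1 - 1 < n) (h2 : p.2 - 1 < n) :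
    w ⟨p.1 - 1, h1⟩ ≠ w ⟨p.2 - 1, h2⟩ := by
  have hpb := C.mem_range p hp
  have hint : ClosedIv C (p.1 + 1) (p.2 - 1) := interior_closed hp
  have hIH := tiling_bwd w Hcup p.2 (p.1 + 1) (p.2 - 1) (by omega) (by omega) (by omega) hint
  have hC := Hcup p hp
  have hsplit : ∀ v : Bool, cnt w v p.1 p.2 =
      cnt w v p.1 p.1 + cnt w v (p.1 + 1) (p.2 - 1) + cnt w v p.2 p.2 := by
    intro v
    rw [cnt_split w v (show p.1 ≤ p.1 + 1 by omega) (show p.1 ≤ p.2 by omega),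
      cnt_split w v (show p.1 + 1 ≤ (p.2 - 1) + 1 by omega) (show p.2 - 1 ≤ p.2 by omega),
      show p.2 - 1 + 1 = p.2 from by omega]
    omega
  have main : ∀ v : Bool, w ⟨p.1 - 1, h1⟩ = v → w ⟨p.2 - 1, h2⟩ = v → False := by
    intro v hx hy
    have ea : cnt w v p.1 p.1 = 1 := by
      rw [cnt_single' w v ⟨p.1 - 1, h1⟩ (by simp only [Fin.val_mk]; omega), if_pos hx]
    have eb : cnt w v p.2 p.2 = 1 := by
      rw [cnt_single' w v ⟨p.2 - 1, h2⟩ (by simp only [Fin.val_mk]; omega), if_pos hy]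
    have hs := hsplit v
    have h2d : 2 * cnt w v p.1 p.2 = p.2 + 1 - p.1 := by
      cases v
      · exact hC.2
      · exact hC.1
    have hid : 2 * cnt w v (p.1 + 1) (p.2 - 1) = (p.2 - 1) + 1 - (p.1 + 1) := by
      cases v
      · exact hIH.2
      · exact hIH.1
    omega
  intro heq
  rcases Bool.eq_false_or_eq_true (w ⟨p.1 - 1, h1⟩) with hx | hx
  · exact main true hx (heq.symm.trans hx)
  · exact main false hx (heq.symm.trans hx)

lemma bcount_ge_cups {C : CrossinglessMatching n} (w : Fin n → Bool)
    (Hb : ∀ p ∈ C.cups, 2 * cnt w true p.1 p.2 = p.2 + 1 - p.1) :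
    ∀ x, x ≤ n → (C.cups.filter fun q => q.2 ≤ x).card ≤ bcount n w x := by
  classical
  intro x
  induction x using Nat.strong_induction_on with
  | _ x ihx =>
    intro hxn
    by_cases hre : ∃ q ∈ C.cups, q.2 = x
    · obtain ⟨q, hq, hq2⟩ := hre
      have hqb := C.mem_range q hq
      have hsplitF : (C.cups.filter fun r => r.2 ≤ x) =
          (C.cups.filter fun r => r.2 ≤ q.1 - 1) ∪
          (C.cups.filter fun r => q.1 ≤ r.2 ∧ r.2 ≤ x) := by
        ext r
        simp only [Finset.mem_union, Finset.mem_filter]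
        constructor
        · rintro ⟨hr, hrx⟩
          rcases le_or_gt r.2 (q.1 - 1) with h | h
          · exact Or.inl ⟨hr, h⟩
          · exact Or.inr ⟨hr, by omega, hrx⟩
        · rintro (⟨hr, h⟩ | ⟨hr, h, h'⟩)
          · exact ⟨hr, by omega⟩
          · exact ⟨hr, h'⟩
      have hdisjF : Disjoint (C.cups.filter fun r => r.2 ≤ q.1 - 1)
          (C.cups.filter fun r => q.1 ≤ r.2 ∧ r.2 ≤ x) := by
        rw [Finset.disjoint_left]
        intro r hr1 hr2
        simp only [Finset.mem_filter] at hr1 hr2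
        have := C.mem_range r hr1.1
        omega
      have hIHq := ihx (q.1 - 1) (by omega) (by omega)
      have hsub : (C.cups.filter fun r => q.1 ≤ r.2 ∧ r.2 ≤ x) ⊆
          (C.cups.filter fun r => q.1 ≤ r.1 ∧ r.2 ≤ x) := by
        intro r hr
        rw [Finset.mem_filter] at hr ⊢
        obtain ⟨hr, hr1, hr2⟩ := hr
        refine ⟨hr, ?_, hr2⟩
        by_cases hrq : r = q
        · rw [hrq]
        · have hd := C.disjoint' r hr q hq hrq
          have hrb := C.mem_range r hr
          have : q.1 < r.2 ∧ r.2 < q.2 := by omega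
          have := cup_inside hq hr (Or.inr rfl) this.1 this.2
          omega
      have hbound := two_mul_card_cups_le (C := C) (a := q.1) (b := x) (by omega)
      have hδ := Hb q hq
      have hbc : bcount n w x = bcount n w (q.1 - 1) + cnt w true q.1 x :=
        bcount_split w (by omega) (by omega)
      have hcards : (C.cups.filter fun r => r.2 ≤ x).card =
          (C.cups.filter fun r => r.2 ≤ q.1 - 1).card +
          (C.cups.filter fun r => q.1 ≤ r.2 ∧ r.2 ≤ x).card := by
        rw [hsplitF, Finset.card_union_of_disjoint hdisjF]
      have hsubcard := Finset.card_le_card hsub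
      rw [hq2] at hδ
      omega
    · push_neg at hre
      rcases Nat.eq_zero_or_pos x with rfl | hx
      · have : (C.cups.filter fun q => q.2 ≤ 0) = ∅ := by
          rw [Finset.filter_eq_empty_iff]
          intro r hr
          have := C.mem_range r hr
          omega
        rw [this]
        simp
      · have heqF : (C.cups.filter fun q => q.2 ≤ x) =
            (C.cups.filter fun q => q.2 ≤ x - 1) := by
          ext r
          simp only [Finset.mem_filter]
          constructor
          · rintro ⟨hr, h⟩
            have := hre r hr
            exact ⟨hr, by omega⟩
          · rintro ⟨hr, h⟩
            exact ⟨hr, by omega⟩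
        rw [heqF]
        exact le_trans (ihx (x - 1) (by omega) (by omega)) (bcount_mono w (by omega))

lemma cup_fst_lt {C : CrossinglessMatching n} {q : ℕ × ℕ} (hq : q ∈ C.cups) : q.1 - 1 < n := by
  have := C.mem_range q hq; omega

lemma cup_snd_lt {C : CrossinglessMatching n} {q : ℕ × ℕ} (hq : q ∈ C.cups) : q.2 - 1 < n := by
  have := C.mem_range q hq; omega

lemma uniqueL {C : CrossinglessMatching n} {m : ℕ} (h : ∃ q ∈ C.cups, q.1 = m) :
    ∃! q, q ∈ C.cups ∧ q.1 = m := by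
  obtain ⟨q, hq, h1⟩ := h
  exact ⟨q, ⟨hq, h1⟩, fun q' hq' =>
    cup_unique hq'.1 hq (Or.inl hq'.2.symm) (Or.inl h1.symm)⟩

lemma uniqueR {C : CrossinglessMatching n} {m : ℕ} (h : ∃ q ∈ C.cups, q.2 = m) :
    ∃! q, q ∈ C.cups ∧ q.2 = m := by
  obtain ⟨q, hq, h1⟩ := h
  exact ⟨q, ⟨hq, h1⟩, fun q' hq' =>
    cup_unique hq'.1 hq (Or.inr hq'.2.symm) (Or.inr h1.symm)⟩

lemma uniqueE {C : CrossinglessMatching n} {m : ℕ} (h : Matched n C m) :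
    ∃! q, q ∈ C.cups ∧ (m = q.1 ∨ m = q.2) := by
  obtain ⟨q, hq, h1⟩ := h
  exact ⟨q, ⟨hq, h1⟩, fun q' hq' => cup_unique hq'.1 hq hq'.2 h1⟩

/-- The weight sequence associated to a choice of orientation of each cup. -/
def orientOf (C : CrossinglessMatching n) (g : {q : ℕ × ℕ // q ∈ C.cups} → Bool) :
    Fin n → Bool := fun j =>
  if hL : ∃ q ∈ C.cups, q.1 = j.val + 1 then
    g ⟨C.cups.choose _ (uniqueL hL), Finset.choose_mem _ _ _⟩
  else if hR : ∃ q ∈ C.cups, q.2 = j.val + 1 then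
    ! g ⟨C.cups.choose _ (uniqueR hR), Finset.choose_mem _ _ _⟩
  else false

lemma orientOf_left {C : CrossinglessMatching n} (g : {q : ℕ × ℕ // q ∈ C.cups} → Bool)
    {q : ℕ × ℕ} (hq : q ∈ C.cups) (h : q.1 - 1 < n) :
    orientOf C g ⟨q.1 - 1, h⟩ = g ⟨q, hq⟩ := by
  have hqb := C.mem_range q hq
  have hL : ∃ q' ∈ C.cups, q'.1 = (⟨q.1 - 1, h⟩ : Fin n).val + 1 :=
    ⟨q, hq, by simp only [Fin.val_mk]; omega⟩
  rw [orientOf, dif_pos hL]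
  refine congrArg g (Subtype.ext ?_)
  have hc : C.cups.choose _ (uniqueL hL) = q :=
    (uniqueL hL).unique
      ⟨Finset.choose_mem _ C.cups (uniqueL hL), Finset.choose_property _ C.cups (uniqueL hL)⟩
      ⟨hq, by simp only [Fin.val_mk]; omega⟩
  exact hc

lemma orientOf_right {C : CrossinglessMatching n} (g : {q : ℕ × ℕ // q ∈ C.cups} → Bool)
    {q : ℕ × ℕ} (hq : q ∈ C.cups) (h : q.2 - 1 < n) :
    orientOf C g ⟨q.2 - 1, h⟩ = ! g ⟨q, hq⟩ := by
  have hqb := C.mem_range q hq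
  have hL : ¬ ∃ q' ∈ C.cups, q'.1 = (⟨q.2 - 1, h⟩ : Fin n).val + 1 := by
    rintro ⟨q', hq', h1⟩
    simp only [Fin.val_mk] at h1
    have h1' : q'.1 = q.2 := by omega
    by_cases hqq : q' = q
    · rw [hqq] at h1'; omega
    · have := C.disjoint' q' hq' q hq hqq
      omega
  have hR : ∃ q' ∈ C.cups, q'.2 = (⟨q.2 - 1, h⟩ : Fin n).val + 1 :=
    ⟨q, hq, by simp only [Fin.val_mk]; omega⟩
  rw [orientOf, dif_neg hL, dif_pos hR]
  refine congrArg (fun b => ! b) (congrArg g (Subtype.ext ?_))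
  have hc : C.cups.choose _ (uniqueR hR) = q :=
    (uniqueR hR).unique
      ⟨Finset.choose_mem _ C.cups (uniqueR hR), Finset.choose_property _ C.cups (uniqueR hR)⟩
      ⟨hq, by simp only [Fin.val_mk]; omega⟩
  exact hc

lemma orientOf_ray {C : CrossinglessMatching n} (g : {q : ℕ × ℕ // q ∈ C.cups} → Bool)
    {m : ℕ} (hm : ¬ Matched n C m) (h1 : 1 ≤ m) (h : m - 1 < n) :
    orientOf C g ⟨m - 1, h⟩ = false := by
  have hL : ¬ ∃ q' ∈ C.cups, q'.1 = (⟨m - 1, h⟩ : Fin n).val + 1 := by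
    rintro ⟨q', hq', hh⟩
    simp only [Fin.val_mk] at hh
    exact hm ⟨q', hq', Or.inl (by omega)⟩
  have hR : ¬ ∃ q' ∈ C.cups, q'.2 = (⟨m - 1, h⟩ : Fin n).val + 1 := by
    rintro ⟨q', hq', hh⟩
    simp only [Fin.val_mk] at hh
    exact hm ⟨q', hq', Or.inr (by omega)⟩
  rw [orientOf, dif_neg hL, dif_neg hR]

/-- Trues of an orienting sequence up to a position not straddled by any cup
count the cups to the left. -/
lemma bcount_orient' {C : CrossinglessMatching n} (w : Fin n → Bool)
    (Hop : ∀ p ∈ C.cups, ∀ (h1 : p.1 - 1 < n) (h2 : p.2 - 1 < n),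
      w ⟨p.1 - 1, h1⟩ ≠ w ⟨p.2 - 1, h2⟩)
    (Hray : ∀ m : ℕ, 1 ≤ m → m ≤ n → ¬ Matched n C m → ∀ h : m - 1 < n, w ⟨m - 1, h⟩ = false)
    {m : ℕ} (hmn : m ≤ n) (hstrad : ∀ q ∈ C.cups, q.1 ≤ m → q.2 ≤ m) :
    bcount n w m = (C.cups.filter fun q => q.2 ≤ m).card := by
  classical
  have hmatched : ∀ j : Fin n, j.val < m → w j = true → Matched n C (j.val + 1) := by
    intro j hjm hjt
    by_contra hun
    have := Hray (j.val + 1) (by omega) (by omega) hun (by omega)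
    rw [show (⟨j.val + 1 - 1, by omega⟩ : Fin n) = j from Fin.ext (by simp)] at this
    rw [this] at hjt
    exact Bool.false_ne_true hjt
  rw [bcount]
  refine Finset.card_bij (fun j hj => C.cups.choose _
    (uniqueE (hmatched j (Finset.mem_filter.1 hj).2.1 (Finset.mem_filter.1 hj).2.2))) ?_ ?_ ?_
  · intro j hj
    have hu : ∃! q, q ∈ C.cups ∧ (j.val + 1 = q.1 ∨ j.val + 1 = q.2) :=
      uniqueE (hmatched j (Finset.mem_filter.1 hj).2.1 (Finset.mem_filter.1 hj).2.2)
    show C.cups.choose _ hu ∈ C.cups.filter fun q => q.2 ≤ m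
    have hcm := Finset.choose_mem _ C.cups hu
    have hcp := Finset.choose_property _ C.cups hu
    rw [Finset.mem_filter]
    refine ⟨hcm, ?_⟩
    have hjm := (Finset.mem_filter.1 hj).2.1
    have hqb := C.mem_range _ hcm
    rcases hcp with h | h
    · exact hstrad _ hcm (by omega)
    · omega
  · intro j hj j' hj' heq
    have hu : ∃! q, q ∈ C.cups ∧ (j.val + 1 = q.1 ∨ j.val + 1 = q.2) :=
      uniqueE (hmatched j (Finset.mem_filter.1 hj).2.1 (Finset.mem_filter.1 hj).2.2)
    have hu' : ∃! q, q ∈ C.cups ∧ (j'.val + 1 = q.1 ∨ j'.val + 1 = q.2) :=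
      uniqueE (hmatched j' (Finset.mem_filter.1 hj').2.1 (Finset.mem_filter.1 hj').2.2)
    have heq2 : C.cups.choose _ hu = C.cups.choose _ hu' := heq
    have hcp := Finset.choose_property _ C.cups hu
    have hcp' := Finset.choose_property _ C.cups hu'
    have hcm := Finset.choose_mem _ C.cups hu
    rw [← heq2] at hcp'
    set q := C.cups.choose _ hu with hqdef
    have hqb := C.mem_range q hcm
    by_contra hne
    have hvne : j.val ≠ j'.val := fun h => hne (Fin.ext h)
    have hop := Hop q hcm (by omega) (by omega)
    have hwj : w j = true := (Finset.mem_filter.1 hj).2.2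
    have hwj' : w j' = true := (Finset.mem_filter.1 hj').2.2
    rcases hcp with h | h <;> rcases hcp' with h' | h'
    · omega
    · have e1 : (⟨q.1 - 1, by omega⟩ : Fin n) = j := Fin.ext (by simp only [Fin.val_mk]; omega)
      have e2 : (⟨q.2 - 1, by omega⟩ : Fin n) = j' := Fin.ext (by simp only [Fin.val_mk]; omega)
      rw [e1, e2, hwj, hwj'] at hop
      exact hop rfl
    · have e1 : (⟨q.1 - 1, by omega⟩ : Fin n) = j' := Fin.ext (by simp only [Fin.val_mk]; omega)
      have e2 : (⟨q.2 - 1, by omega⟩ : Fin n) = j := Fin.ext (by simp only [Fin.val_mk]; omega)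
      rw [e1, e2, hwj, hwj'] at hop
      exact hop rfl
    · omega
  · intro q hq
    rw [Finset.mem_filter] at hq
    obtain ⟨hq, hq2m⟩ := hq
    have hqb := C.mem_range q hq
    have hop := Hop q hq (by omega) (by omega)
    have hpick : ∃ j : Fin n, (j.val + 1 = q.1 ∨ j.val + 1 = q.2) ∧ w j = true := by
      rcases Bool.eq_false_or_eq_true (w ⟨q.1 - 1, by omega⟩) with hx | hx
      · exact ⟨⟨q.1 - 1, by omega⟩, Or.inl (by simp only [Fin.val_mk]; omega), hx⟩
      · refine ⟨⟨q.2 - 1, by omega⟩, Or.inr (by simp only [Fin.val_mk]; omega), ?_⟩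
        rcases Bool.eq_false_or_eq_true (w ⟨q.2 - 1, by omega⟩) with hy | hy
        · exact hy
        · rw [hx, hy] at hop; exact absurd rfl hop
    obtain ⟨j, hje, hjt⟩ := hpick
    have hjm : j.val < m := by
      rcases hje with h | h
      · have := hstrad q hq (by omega); omega
      · omega
    refine ⟨j, Finset.mem_filter.2 ⟨Finset.mem_univ _, hjm, hjt⟩, ?_⟩
    have hu : ∃! r, r ∈ C.cups ∧ (j.val + 1 = r.1 ∨ j.val + 1 = r.2) :=
      uniqueE (hmatched j hjm hjt)
    show C.cups.choose _ hu = q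
    exact hu.unique ⟨Finset.choose_mem _ C.cups hu, Finset.choose_property _ C.cups hu⟩
      ⟨hq, by omega⟩

lemma card_orientations (C : CrossinglessMatching n) (hcard : C.cups.card = k) :
    Nat.card {w : Fin n → Bool // IsWeightSeq n k w ∧ OrientsMatching n w C} = 2 ^ k := by
  classical
  have bool_ne : ∀ b : Bool, b ≠ !b := by decide
  have bool3 : ∀ a b c : Bool, a ≠ c → b ≠ c → a = b := by decide
  set f : {w : Fin n → Bool // IsWeightSeq n k w ∧ OrientsMatching n w C} →
      ({q : ℕ × ℕ // q ∈ C.cups} → Bool) :=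
    fun w q => w.1 ⟨q.1.1 - 1, cup_fst_lt q.2⟩ with hf
  have hinj : Function.Injective f := by
    intro w w' heq
    apply Subtype.ext
    funext j
    by_cases hMat : Matched n C (j.val + 1)
    · obtain ⟨q, hq, hj⟩ := hMat
      have hqb := C.mem_range q hq
      have heqq : w.1 ⟨q.1 - 1, cup_fst_lt hq⟩ = w'.1 ⟨q.1 - 1, cup_fst_lt hq⟩ :=
        congrFun heq ⟨q, hq⟩
      rcases hj with hj | hj
      · have e1 : (⟨q.1 - 1, cup_fst_lt hq⟩ : Fin n) = j :=
          Fin.ext (by simp only [Fin.val_mk]; omega)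
        rwa [e1] at heqq
      · have e2 : (⟨q.2 - 1, cup_snd_lt hq⟩ : Fin n) = j :=
          Fin.ext (by simp only [Fin.val_mk]; omega)
        rw [← e2]
        have h1 := w.2.2.1 q hq (cup_fst_lt hq) (cup_snd_lt hq)
        have h2 := w'.2.2.1 q hq (cup_fst_lt hq) (cup_snd_lt hq)
        rw [← heqq] at h2
        exact bool3 _ _ _ h1.symm h2.symm
    · have h1 := w.2.2.2 (j.val + 1) (by omega) (by omega) hMat (by omega)
      have h2 := w'.2.2.2 (j.val + 1) (by omega) (by omega) hMat (by omega)
      have ej : (⟨j.val + 1 - 1, by omega⟩ : Fin n) = j := Fin.ext (by simp)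
      rw [ej] at h1 h2
      rw [h1, h2]
  have hsurj : Function.Surjective f := by
    intro g
    have Hop : ∀ p ∈ C.cups, ∀ (h1 : p.1 - 1 < n) (h2 : p.2 - 1 < n),
        orientOf C g ⟨p.1 - 1, h1⟩ ≠ orientOf C g ⟨p.2 - 1, h2⟩ := by
      intro p hp h1 h2
      rw [orientOf_left g hp h1, orientOf_right g hp h2]
      exact bool_ne _
    have Hray : ∀ m, 1 ≤ m → m ≤ n → ¬ Matched n C m →
        ∀ h : m - 1 < n, orientOf C g ⟨m - 1, h⟩ = false :=
      fun m h1 _ hm h => orientOf_ray g hm h1 h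
    have hws : IsWeightSeq n k (orientOf C g) := by
      rw [isWeightSeq_iff,
        bcount_orient' (orientOf C g) Hop Hray le_rfl
          (fun q hq _ => by have := C.mem_range q hq; omega),
        show (C.cups.filter fun q => q.2 ≤ n) = C.cups from
          Finset.filter_true_of_mem (fun q hq => by have := C.mem_range q hq; omega)]
      exact hcard
    refine ⟨⟨orientOf C g, hws, Hop, Hray⟩, ?_⟩
    funext q
    obtain ⟨q, hq⟩ := q
    show orientOf C g ⟨q.1 - 1, cup_fst_lt hq⟩ = g ⟨q, hq⟩
    exact orientOf_left g hq _
  rw [Nat.card_eq_of_bijective f ⟨hinj, hsurj⟩, Nat.card_eq_fintype_card, Fintype.card_fun,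
    Fintype.card_coe, hcard, Fintype.card_bool]

lemma spanPQ_le_params (hk : k ≤ n) {t1 b1 t2 b2 : ℕ} (h1 : t1 ≤ n - k) (h2 : b1 ≤ k)
    (h3 : t2 ≤ n - k) (hle : spanPQ n k t1 b1 ≤ spanPQ n k t2 b2) : t1 ≤ t2 ∧ b1 ≤ b2 := by
  constructor
  · by_contra hlt
    push_neg at hlt
    have hj : t2 < n := by omega
    have hp1 : pqOK n k t1 b1 t2 := Or.inl ⟨hlt, by omega⟩
    have hp2 : ¬ pqOK n k t2 b2 t2 := by simp only [pqOK]; omega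
    have hmem := hle (single_mem_spanPQ (j := ⟨t2, hj⟩) hp1)
    rw [mem_spanPQ] at hmem
    have := hmem ⟨t2, hj⟩ hp2
    simp at this
  · by_contra hlt
    push_neg at hlt
    have hj : n - k + b2 < n := by omega
    have hp1 : pqOK n k t1 b1 (n - k + b2) := Or.inr ⟨by omega, by omega⟩
    have hp2 : ¬ pqOK n k t2 b2 (n - k + b2) := by simp only [pqOK]; omega
    have hmem := hle (single_mem_spanPQ (j := ⟨n - k + b2, hj⟩) hp1)
    rw [mem_spanPQ] at hmem
    have := hmem ⟨n - k + b2, hj⟩ hp2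
    simp at this

lemma bcount_succ (w : Fin n → Bool) {m : ℕ} (hm : m < n) :
    bcount n w (m + 1) = bcount n w m + (if w ⟨m, hm⟩ = true then 1 else 0) := by
  have h := bcount_split w (a := m + 1) (b := m + 1) (by omega) (by omega)
  rw [show m + 1 - 1 = m from by omega] at h
  rw [h, cnt_single' w true ⟨m, hm⟩ (by simp only [Fin.val_mk])]

lemma tcount_succ (w : Fin n → Bool) {m : ℕ} (hm : m < n) :
    tcount n w (m + 1) = tcount n w m + (if w ⟨m, hm⟩ = false then 1 else 0) := by
  have h := tcount_split w (a := m + 1) (b := m + 1) (by omega) (by omega)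
  rw [show m + 1 - 1 = m from by omega] at h
  rw [h, cnt_single' w false ⟨m, hm⟩ (by simp only [Fin.val_mk])]

lemma Nmap_P {x : Fin n → ℂ} (hx : x ∈ Pmod n k) : Nmap n k x ∈ Pmod n k := by
  rw [Pmod, mem_spanPQ] at hx ⊢
  intro j hj
  rw [Nmap_apply]
  by_cases hc : j.val + 1 < n ∧ j.val + 1 ≠ n - k
  · rw [dif_pos hc]
    refine hx _ ?_
    simp only [pqOK, Fin.val_mk] at hj ⊢
    omega
  · rw [dif_neg hc]

lemma Nmap_Q {x : Fin n → ℂ} (hx : x ∈ Qmod n k) : Nmap n k x ∈ Qmod n k := by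
  rw [Qmod, mem_spanPQ] at hx ⊢
  intro j hj
  rw [Nmap_apply]
  by_cases hc : j.val + 1 < n ∧ j.val + 1 ≠ n - k
  · rw [dif_pos hc]
    refine hx _ ?_
    simp only [pqOK, Fin.val_mk] at hj ⊢
    omega
  · rw [dif_neg hc]

lemma tabWeight_true_iff (S : StandardTableau n k) (j : Fin n) :
    tabWeight n k S j = true ↔ ∃ i, S.bot i = j.val + 1 := by
  rw [tabWeight]
  exact decide_eq_true_iff

lemma bcount_tab {C : CrossinglessMatching n} (S : StandardTableau n k)
    (hmatch : IsMatchOf n k S C) (m : ℕ) :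
    bcount n (tabWeight n k S) m = (C.cups.filter fun q => q.1 ≤ m).card := by
  classical
  have hex : ∀ j : Fin n, tabWeight n k S j = true → ∃ q ∈ C.cups, q.1 = j.val + 1 := by
    intro j hj
    exact (hmatch.2 (j.val + 1)).2 ((tabWeight_true_iff S j).1 hj)
  rw [bcount]
  refine Finset.card_bij (fun j hj => C.cups.choose _
    (uniqueL (hex j (Finset.mem_filter.1 hj).2.2))) ?_ ?_ ?_
  · intro j hj
    have hu : ∃! q, q ∈ C.cups ∧ q.1 = j.val + 1 := uniqueL (hex j (Finset.mem_filter.1 hj).2.2)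
    show C.cups.choose _ hu ∈ C.cups.filter fun q => q.1 ≤ m
    have hcm := Finset.choose_mem _ C.cups hu
    have hcp := Finset.choose_property _ C.cups hu
    rw [Finset.mem_filter]
    have := (Finset.mem_filter.1 hj).2.1
    exact ⟨hcm, by omega⟩
  · intro j hj j' hj' heq
    have hu : ∃! q, q ∈ C.cups ∧ q.1 = j.val + 1 := uniqueL (hex j (Finset.mem_filter.1 hj).2.2)
    have hu' : ∃! q, q ∈ C.cups ∧ q.1 = j'.val + 1 :=
      uniqueL (hex j' (Finset.mem_filter.1 hj').2.2)
    have heq2 : C.cups.choose _ hu = C.cups.choose _ hu' := heq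
    have hcp := Finset.choose_property _ C.cups hu
    have hcp' := Finset.choose_property _ C.cups hu'
    rw [← heq2] at hcp'
    exact Fin.ext (by omega)
  · intro q hq
    rw [Finset.mem_filter] at hq
    obtain ⟨hq, hq1m⟩ := hq
    have hqb := C.mem_range q hq
    have hjn : q.1 - 1 < n := by omega
    have hwt : tabWeight n k S ⟨q.1 - 1, hjn⟩ = true := by
      rw [tabWeight_true_iff]
      refine (hmatch.2 ((⟨q.1 - 1, hjn⟩ : Fin n).val + 1)).1 ⟨q, hq, ?_⟩
      simp only [Fin.val_mk]
      omega
    refine ⟨⟨q.1 - 1, hjn⟩, Finset.mem_filter.2 ⟨Finset.mem_univ _,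
      by simp only [Fin.val_mk]; omega, hwt⟩, ?_⟩
    have hu : ∃! r, r ∈ C.cups ∧ r.1 = (⟨q.1 - 1, hjn⟩ : Fin n).val + 1 :=
      uniqueL (hex _ hwt)
    show C.cups.choose _ hu = q
    exact hu.unique ⟨Finset.choose_mem _ C.cups hu, Finset.choose_property _ C.cups hu⟩
      ⟨hq, by simp only [Fin.val_mk]; omega⟩

lemma filter_straddle_eq {C : CrossinglessMatching n} {m : ℕ} (hm : ¬ Matched n C m) :
    (C.cups.filter fun q => q.1 ≤ m) = (C.cups.filter fun q => q.2 ≤ m) := by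
  ext q
  simp only [Finset.mem_filter]
  constructor
  · rintro ⟨hq, h⟩
    exact ⟨hq, (matched_straddle hq hm h).le⟩
  · rintro ⟨hq, h⟩
    have := C.mem_range q hq
    exact ⟨hq, by omega⟩

lemma ray_count_facts {C : CrossinglessMatching n} (hcard : C.cups.card = k)
    {m : ℕ} (hm1 : 1 ≤ m) (hmn : m ≤ n) (hm : ¬ Matched n C m) :
    (C.cups.filter fun q => q.1 ≤ m).card ≤ k ∧
    2 * (C.cups.filter fun q => q.1 ≤ m).card ≤ m ∧
    m + 2 * k ≤ n + 2 * (C.cups.filter fun q => q.1 ≤ m).card := by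
  classical
  have hle : (C.cups.filter fun q => q.1 ≤ m).card ≤ k := by
    rw [← hcard]
    exact Finset.card_filter_le _ _
  refine ⟨hle, ?_, ?_⟩
  · have h1 := two_mul_card_cups_le (C := C) (a := 1) (b := m) le_rfl
    have heq : (C.cups.filter fun q => 1 ≤ q.1 ∧ q.2 ≤ m) =
        (C.cups.filter fun q => q.1 ≤ m) := by
      rw [filter_straddle_eq hm]
      ext q
      simp only [Finset.mem_filter]
      exact ⟨fun h => ⟨h.1, h.2.2⟩, fun h => ⟨h.1, (C.mem_range q h.1).1, h.2⟩⟩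
    rw [heq] at h1
    omega
  · have h1 := two_mul_card_cups_le (C := C) (a := m + 1) (b := n) (by omega)
    have heq : (C.cups.filter fun q => m + 1 ≤ q.1 ∧ q.2 ≤ n) =
        (C.cups.filter fun q => ¬ q.1 ≤ m) := by
      ext q
      simp only [Finset.mem_filter]
      constructor
      · rintro ⟨hq, h, h'⟩; exact ⟨hq, by omega⟩
      · rintro ⟨hq, h⟩
        have := C.mem_range q hq
        exact ⟨hq, by omega, by omega⟩
    rw [heq] at h1
    have h2 : (C.cups.filter fun q => q.1 ≤ m).card +
        (C.cups.filter fun q => ¬ q.1 ≤ m).card = k := by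
      rw [Finset.card_filter_add_card_filter_not, hcard]
    omega

lemma ray_comap_eq (hk2 : 2 * k ≤ n) {t b m : ℕ} (htb : t + b = m) (hbk : b ≤ k)
    (hmn : m ≤ n) (h2b : 2 * b ≤ m) (hgap : m + 2 * k ≤ n + 2 * b) :
    Submodule.comap ((Nmap n k) ^ b)
      (LinearMap.range ((Nmap n k) ^ (n - k - t + b))) = spanPQ n k t b := by
  have hk : k ≤ n := by omega
  rw [range_pow_spanPQ hk]
  have e1 : n - k - (n - k - t + b) = t - b := by omega
  have e2 : k - (n - k - t + b) = 0 := by omega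
  rw [e1, e2, comap_pow_spanPQ b (by omega) (by omega)]
  rw [show min (n - k) (t - b + b) = t from by omega, show min k (0 + b) = b from by omega]

lemma phi_torusFixed (w : Fin n → Bool) : TorusFixed n k (PhiFlag n k w) := by
  intro i
  simp only [PhiFlag]
  rw [spanPQ_inf_P, spanPQ_inf_Q, spanPQ_sup]

lemma phi_isNFlag (hk2 : 2 * k ≤ n) (w : Fin n → Bool) (hw : IsWeightSeq n k w) :
    IsNFlag n k (PhiFlag n k w) := by
  have hk : k ≤ n := by omega
  refine ⟨?_, ?_, ?_⟩
  · intro i j hij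
    simp only [PhiFlag]
    exact spanPQ_mono (tcount_mono w hij) (bcount_mono w hij)
  · intro i
    simp only [PhiFlag]
    show finrank ℂ (spanPQ n k (tcount n w i.val) (bcount n w i.val)) = i.val
    rw [finrank_spanPQ hk (tcount_le hk w hw _) (bcount_le w hw _)]
    have h1 := tcount_add_bcount w i.val
    have h2 := i.isLt
    omega
  · intro i
    simp only [PhiFlag]
    rw [← pow_one (Nmap n k),
      map_pow_spanPQ hk 1 (tcount_le hk w hw _) (bcount_le w hw _)]
    have ht := tcount_succ w i.isLt
    have hb := bcount_succ w i.isLt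
    rw [Fin.val_succ, Fin.coe_castSucc]
    refine spanPQ_mono ?_ ?_
    · rcases Bool.eq_false_or_eq_true (w ⟨i.val, i.isLt⟩) with h | h <;> rw [h] at ht <;>
        simp at ht <;> omega
    · rcases Bool.eq_false_or_eq_true (w ⟨i.val, i.isLt⟩) with h | h <;> rw [h] at hb <;>
        simp at hb <;> omega

/-- Extract a weight sequence from a torus-fixed flag. -/
noncomputable def extractW (n k : ℕ) (F : Fin (n + 1) → Submodule ℂ (Fin n → ℂ)) :
    Fin n → Bool := fun j =>
  decide (finrank ℂ ↥(F j.succ ⊓ Qmod n k) = finrank ℂ ↥(F j.castSucc ⊓ Qmod n k) + 1)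

lemma flag_structure (hk2 : 2 * k ≤ n) {F : Fin (n + 1) → Submodule ℂ (Fin n → ℂ)}
    (hNF : IsNFlag n k F) (hTF : TorusFixed n k F) :
    IsWeightSeq n k (extractW n k F) ∧
    (∀ i : Fin (n + 1),
      F i = spanPQ n k (tcount n (extractW n k F) i.val) (bcount n (extractW n k F) i.val)) := by
  have hk : k ≤ n := by omega
  have hmapF : ∀ i : Fin (n + 1), ∀ x ∈ F i, Nmap n k x ∈ F i := by
    intro i
    rcases Fin.eq_zero_or_eq_succ i with rfl | ⟨j, rfl⟩
    · have h0 : F 0 = ⊥ := by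
        have h := hNF.2.1 0
        exact Submodule.finrank_eq_zero.1 (by simpa using h)
      intro x hx
      rw [h0, Submodule.mem_bot] at hx
      rw [hx, LinearMap.map_zero, h0]
      exact Submodule.zero_mem ⊥
    · intro x hx
      have h1 : Nmap n k x ∈ F j.castSucc := hNF.2.2 j ⟨x, hx, rfl⟩
      exact hNF.1 (show j.castSucc ≤ j.succ by
        rw [Fin.le_def, Fin.coe_castSucc, Fin.val_succ]; omega) h1
  have hP : ∀ i : Fin (n + 1), F i ⊓ Pmod n k =
      spanPQ n k (finrank ℂ ↥(F i ⊓ Pmod n k)) 0 ∧ finrank ℂ ↥(F i ⊓ Pmod n k) ≤ n - k := by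
    intro i
    obtain ⟨m, hm, hW⟩ := exists_param_P (W := F i ⊓ Pmod n k) hk inf_le_right
      (fun x hx => Submodule.mem_inf.2
        ⟨hmapF i x (Submodule.mem_inf.1 hx).1, Nmap_P (Submodule.mem_inf.1 hx).2⟩)
    have hfr : finrank ℂ ↥(F i ⊓ Pmod n k) = m := by
      rw [hW, finrank_spanPQ hk hm (Nat.zero_le k)]
      omega
    rw [hfr]
    exact ⟨hW, hm⟩
  have hQ : ∀ i : Fin (n + 1), F i ⊓ Qmod n k =
      spanPQ n k 0 (finrank ℂ ↥(F i ⊓ Qmod n k)) ∧ finrank ℂ ↥(F i ⊓ Qmod n k) ≤ k := by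
    intro i
    obtain ⟨m, hm, hW⟩ := exists_param_Q (W := F i ⊓ Qmod n k) hk2 inf_le_right
      (fun x hx => Submodule.mem_inf.2
        ⟨hmapF i x (Submodule.mem_inf.1 hx).1, Nmap_Q (Submodule.mem_inf.1 hx).2⟩)
    have hfr : finrank ℂ ↥(F i ⊓ Qmod n k) = m := by
      rw [hW, finrank_spanPQ hk (Nat.zero_le _) hm, Nat.zero_add]
    rw [hfr]
    exact ⟨hW, hm⟩
  have hFi : ∀ i : Fin (n + 1), F i =
      spanPQ n k (finrank ℂ ↥(F i ⊓ Pmod n k)) (finrank ℂ ↥(F i ⊓ Qmod n k)) := by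
    intro i
    have h := hTF i
    rw [(hP i).1, (hQ i).1, spanPQ_sup] at h
    exact h
  have hsum : ∀ i : Fin (n + 1),
      finrank ℂ ↥(F i ⊓ Pmod n k) + finrank ℂ ↥(F i ⊓ Qmod n k) = i.val := by
    intro i
    have h := hNF.2.1 i
    rw [hFi i, finrank_spanPQ hk (hP i).2 (hQ i).2] at h
    exact h
  have hBmono : ∀ i j : Fin (n + 1), i ≤ j →
      finrank ℂ ↥(F i ⊓ Qmod n k) ≤ finrank ℂ ↥(F j ⊓ Qmod n k) := by
    intro i j hij
    have hle : spanPQ n k 0 (finrank ℂ ↥(F i ⊓ Qmod n k)) ≤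
        spanPQ n k 0 (finrank ℂ ↥(F j ⊓ Qmod n k)) := by
      rw [← (hQ i).1, ← (hQ j).1]
      exact inf_le_inf_right _ (hNF.1 hij)
    exact (spanPQ_le_params hk (Nat.zero_le _) (hQ i).2 (Nat.zero_le _) hle).2
  have hTmono : ∀ i j : Fin (n + 1), i ≤ j →
      finrank ℂ ↥(F i ⊓ Pmod n k) ≤ finrank ℂ ↥(F j ⊓ Pmod n k) := by
    intro i j hij
    have hle : spanPQ n k (finrank ℂ ↥(F i ⊓ Pmod n k)) 0 ≤
        spanPQ n k (finrank ℂ ↥(F j ⊓ Pmod n k)) 0 := by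
      rw [← (hP i).1, ← (hP j).1]
      exact inf_le_inf_right _ (hNF.1 hij)
    exact (spanPQ_le_params hk (hP i).2 (Nat.zero_le _) (hP j).2 hle).1
  set w := extractW n k F with hwdef
  have hcount : ∀ i : ℕ, ∀ hi : i < n + 1,
      tcount n w i = finrank ℂ ↥(F ⟨i, hi⟩ ⊓ Pmod n k) ∧
      bcount n w i = finrank ℂ ↥(F ⟨i, hi⟩ ⊓ Qmod n k) := by
    intro i
    induction i with
    | zero =>
      intro hi
      have h1 := tcount_add_bcount w 0
      have h2 := hsum ⟨0, hi⟩
      simp only [Fin.val_mk] at h2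
      constructor <;> omega
    | succ i ih =>
      intro hi
      have hi' : i < n + 1 := by omega
      obtain ⟨ht, hb⟩ := ih hi'
      have hin : i < n := by omega
      have hsucc : (⟨i + 1, hi⟩ : Fin (n + 1)) = (⟨i, hin⟩ : Fin n).succ :=
        Fin.ext (by simp)
      have hcast : (⟨i, hi'⟩ : Fin (n + 1)) = (⟨i, hin⟩ : Fin n).castSucc :=
        Fin.ext (by simp)
      have hs := hsum ⟨i + 1, hi⟩
      have hs' := hsum ⟨i, hi'⟩
      simp only [Fin.val_mk] at hs hs'
      have hBm := hBmono ⟨i, hi'⟩ ⟨i + 1, hi⟩ (by rw [Fin.le_def]; simp)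
      have hTm := hTmono ⟨i, hi'⟩ ⟨i + 1, hi⟩ (by rw [Fin.le_def]; simp)
      have hwj : w ⟨i, hin⟩ = decide
          (finrank ℂ ↥(F ⟨i + 1, hi⟩ ⊓ Qmod n k) = finrank ℂ ↥(F ⟨i, hi'⟩ ⊓ Qmod n k) + 1) := by
        rw [hwdef, extractW, ← hsucc, ← hcast]
      rw [tcount_succ w hin, bcount_succ w hin, ht, hb]
      by_cases hBinc : finrank ℂ ↥(F ⟨i + 1, hi⟩ ⊓ Qmod n k) =
          finrank ℂ ↥(F ⟨i, hi'⟩ ⊓ Qmod n k) + 1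
      · have hwt : w ⟨i, hin⟩ = true := by rw [hwj]; exact decide_eq_true hBinc
        rw [hwt]
        simp only [Bool.true_eq_false, if_false, if_true]
        constructor <;> omega
      · have hwt : w ⟨i, hin⟩ = false := by rw [hwj]; exact decide_eq_false hBinc
        rw [hwt]
        simp only [Bool.false_eq_true, if_false, if_true]
        constructor <;> omega
  have hWS : IsWeightSeq n k w := by
    rw [isWeightSeq_iff, (hcount n (by omega)).2]
    have h1 := hsum ⟨n, by omega⟩
    have h2 := (hP ⟨n, by omega⟩).2
    have h3 := (hQ ⟨n, by omega⟩).2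
    simp only [Fin.val_mk] at h1
    omega
  refine ⟨hWS, fun i => ?_⟩
  have hcc := hcount i.val i.isLt
  have hieta : (⟨i.val, i.isLt⟩ : Fin (n + 1)) = i := rfl
  rw [hcc.1, hcc.2, hieta] at *
  exact hFi i

lemma extractW_phi (hk2 : 2 * k ≤ n) (w : Fin n → Bool) (hw : IsWeightSeq n k w) :
    extractW n k (PhiFlag n k w) = w := by
  have hk : k ≤ n := by omega
  funext j
  simp only [extractW, PhiFlag]
  show decide (finrank ℂ ↥(spanPQ n k (tcount n w j.succ.val) (bcount n w j.succ.val) ⊓ Qmod n k) =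
    finrank ℂ ↥(spanPQ n k (tcount n w j.castSucc.val) (bcount n w j.castSucc.val) ⊓ Qmod n k) + 1) = w j
  have hb := bcount_succ w j.isLt
  have hje : (⟨j.val, j.isLt⟩ : Fin n) = j := rfl
  rw [hje] at hb
  rcases Bool.eq_false_or_eq_true (w j) with hj | hj <;> rw [hj]
  · rw [decide_eq_true_eq]
    rw [spanPQ_inf_Q, spanPQ_inf_Q,
      finrank_spanPQ hk (Nat.zero_le _) (bcount_le w hw _),
      finrank_spanPQ hk (Nat.zero_le _) (bcount_le w hw _),
      Fin.val_succ, Fin.coe_castSucc]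
    rw [hj] at hb
    simp at hb
    omega
  · rw [decide_eq_false_iff_not]
    intro hcon
    rw [spanPQ_inf_Q, spanPQ_inf_Q,
      finrank_spanPQ hk (Nat.zero_le _) (bcount_le w hw _),
      finrank_spanPQ hk (Nat.zero_le _) (bcount_le w hw _),
      Fin.val_succ, Fin.coe_castSucc] at hcon
    rw [hj] at hb
    simp at hb
    omega

lemma phi_cupCond (hk2 : 2 * k ≤ n) {C : CrossinglessMatching n} (w : Fin n → Bool)
    (hw : IsWeightSeq n k w)
    (Hop : ∀ p ∈ C.cups, ∀ (h1 : p.1 - 1 < n) (h2 : p.2 - 1 < n),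
      w ⟨p.1 - 1, h1⟩ ≠ w ⟨p.2 - 1, h2⟩) :
    CupCond n k C (PhiFlag n k w) := by
  have hk : k ≤ n := by omega
  intro p hp h1 h2
  have hpb := C.mem_range p hp
  have hcnt := cup_cnt_fwd w Hop hp
  have hsb := bcount_split w (a := p.1) (b := p.2) (by omega) (by omega)
  have hst := tcount_split w (a := p.1) (b := p.2) (by omega) (by omega)
  simp only [PhiFlag, Fin.val_mk]
  rw [map_pow_spanPQ hk _ (tcount_le hk w hw _) (bcount_le w hw _)]
  rw [show tcount n w p.2 - (p.2 - p.1 + 1) / 2 = tcount n w (p.1 - 1) from by omega,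
    show bcount n w p.2 - (p.2 - p.1 + 1) / 2 = bcount n w (p.1 - 1) from by omega]

lemma phi_rayCond (hk2 : 2 * k ≤ n) {C : CrossinglessMatching n} (S : StandardTableau n k)
    (hmatch : IsMatchOf n k S C) (w : Fin n → Bool) (hw : IsWeightSeq n k w)
    (Hop : ∀ p ∈ C.cups, ∀ (h1 : p.1 - 1 < n) (h2 : p.2 - 1 < n),
      w ⟨p.1 - 1, h1⟩ ≠ w ⟨p.2 - 1, h2⟩)
    (Hray : ∀ m : ℕ, 1 ≤ m → m ≤ n → ¬ Matched n C m → ∀ h : m - 1 < n, w ⟨m - 1, h⟩ = false) :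
    RayCond n k (tabWeight n k S) C (PhiFlag n k w) := by
  have hk : k ≤ n := by omega
  intro m hm1 hm hunm
  have hmn : m ≤ n := by omega
  have hbS := bcount_tab S hmatch m
  have facts := ray_count_facts hmatch.1 hm1 hmn hunm
  have htsum := tcount_add_bcount (tabWeight n k S) m
  have htS : tcount n (tabWeight n k S) m = m - (C.cups.filter fun q => q.1 ≤ m).card := by
    omega
  have hbw : bcount n w m = (C.cups.filter fun q => q.1 ≤ m).card := by
    rw [bcount_orient' w Hop Hray hmn (fun q hq hq1 => (matched_straddle hq hunm hq1).le),
      ← filter_straddle_eq hunm]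
  have hwsum := tcount_add_bcount w m
  have htw : tcount n w m = m - (C.cups.filter fun q => q.1 ≤ m).card := by omega
  rw [hbS, htS, ray_comap_eq hk2 (by omega) facts.1 hmn facts.2.1 facts.2.2]
  simp only [PhiFlag, Fin.val_mk]
  rw [htw, hbw]

lemma cup_counts_bwd (hk2 : 2 * k ≤ n) {C : CrossinglessMatching n}
    {F : Fin (n + 1) → Submodule ℂ (Fin n → ℂ)} (w : Fin n → Bool) (hw : IsWeightSeq n k w)
    (hFi : ∀ i : Fin (n + 1), F i = spanPQ n k (tcount n w i.val) (bcount n w i.val))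
    (hCC : CupCond n k C F) :
    ∀ p ∈ C.cups, 2 * cnt w true p.1 p.2 = p.2 + 1 - p.1 ∧
      2 * cnt w false p.1 p.2 = p.2 + 1 - p.1 := by
  intro p hp
  have hk : k ≤ n := by omega
  have hpb := C.mem_range p hp
  have h := hCC p hp (by omega) (by omega)
  rw [hFi ⟨p.2, by omega⟩, hFi ⟨p.1 - 1, by omega⟩,
    map_pow_spanPQ hk _ (tcount_le hk w hw _) (bcount_le w hw _)] at h
  simp only [Fin.val_mk] at h
  have heq := (spanPQ_eq_iff hk (le_trans (Nat.sub_le _ _) (tcount_le hk w hw _))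
    (le_trans (Nat.sub_le _ _) (bcount_le w hw _)) (tcount_le hk w hw _)
    (bcount_le w hw _)).1 h
  have hsb := bcount_split w (a := p.1) (b := p.2) (by omega) (by omega)
  have hst := tcount_split w (a := p.1) (b := p.2) (by omega) (by omega)
  have hto := cnt_total w (a := p.1) (b := p.2) (by omega) (by omega)
  omega

lemma ray_false_bwd (hk2 : 2 * k ≤ n) {C : CrossinglessMatching n}
    {F : Fin (n + 1) → Submodule ℂ (Fin n → ℂ)} (S : StandardTableau n k)
    (hmatch : IsMatchOf n k S C) (w : Fin n → Bool) (hw : IsWeightSeq n k w)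
    (hFi : ∀ i : Fin (n + 1), F i = spanPQ n k (tcount n w i.val) (bcount n w i.val))
    (hRC : RayCond n k (tabWeight n k S) C F)
    (hcnt : ∀ p ∈ C.cups, 2 * cnt w true p.1 p.2 = p.2 + 1 - p.1 ∧
      2 * cnt w false p.1 p.2 = p.2 + 1 - p.1) :
    ∀ m, 1 ≤ m → m ≤ n → ¬ Matched n C m → ∀ h : m - 1 < n, w ⟨m - 1, h⟩ = false := by
  intro m h1 hmn hunm h
  have hk : k ≤ n := by omega
  set b := (C.cups.filter fun q => q.1 ≤ m).card with hbdef
  have facts := ray_count_facts hmatch.1 h1 hmn hunm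
  have hbS := bcount_tab S hmatch m
  have htsum := tcount_add_bcount (tabWeight n k S) m
  have htS : tcount n (tabWeight n k S) m = m - b := by omega
  have hr := hRC m h1 (by omega) hunm
  rw [hFi ⟨m, by omega⟩, hbS, htS,
    ray_comap_eq hk2 (by omega) facts.1 hmn facts.2.1 facts.2.2] at hr
  simp only [Fin.val_mk] at hr
  have heq := (spanPQ_eq_iff hk (tcount_le hk w hw _) (bcount_le w hw _)
    (by omega) facts.1).1 hr
  have hbw : bcount n w m = b := heq.2
  have hge := bcount_ge_cups w (fun p hp => (hcnt p hp).1) (m - 1) (by omega)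
  have hfeq : (C.cups.filter fun q => q.2 ≤ m - 1) = (C.cups.filter fun q => q.1 ≤ m) := by
    ext q
    simp only [Finset.mem_filter]
    constructor
    · rintro ⟨hq, h'⟩
      have := C.mem_range q hq
      exact ⟨hq, by omega⟩
    · rintro ⟨hq, h'⟩
      have := matched_straddle hq hunm h'
      exact ⟨hq, by omega⟩
  have hstep := bcount_succ w (show m - 1 < n by omega)
  rw [show m - 1 + 1 = m from by omega] at hstep
  rcases Bool.eq_false_or_eq_true (w ⟨m - 1, h⟩) with ht | ht
  · exfalso
    rw [ht] at hstep
    simp at hstep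
    rw [hfeq, ← hbdef] at hge
    omega
  · exact ht

end Aux

/-- Every crossingless matching with exactly `k` cups is oriented by
exactly `2 ^ k` weight sequences; consequently every component `Y_S` contains exactly
`2 ^ k` torus-fixed flags. -/
theorem card_orientations_and_fixed_points (n k : ℕ) (hn : 1 ≤ n) (hkn : 2 * k ≤ n) :
    (∀ C : CrossinglessMatching n, C.cups.card = k →
      Nat.card {w : Fin n → Bool // IsWeightSeq n k w ∧ OrientsMatching n w C} = 2 ^ k) ∧
    (∀ (S : StandardTableau n k) (C : CrossinglessMatching n), IsMatchOf n k S C →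
      Nat.card {F : Fin (n + 1) → Submodule ℂ (Fin n → ℂ) //
          InYS n k S C F ∧ TorusFixed n k F} = 2 ^ k) := by
  constructor
  · intro C hcard
    exact card_orientations C hcard
  · intro S C hmatch
    classical
    have hstruct : ∀ F : {F : Fin (n + 1) → Submodule ℂ (Fin n → ℂ) //
        InYS n k S C F ∧ TorusFixed n k F},
        IsWeightSeq n k (extractW n k F.1) ∧
        ∀ i : Fin (n + 1), F.1 i = spanPQ n k (tcount n (extractW n k F.1) i.val)
          (bcount n (extractW n k F.1) i.val) :=
      fun F => flag_structure hkn F.2.1.1 F.2.2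
    have hcnt : ∀ F : {F : Fin (n + 1) → Submodule ℂ (Fin n → ℂ) //
        InYS n k S C F ∧ TorusFixed n k F}, ∀ p ∈ C.cups,
        2 * cnt (extractW n k F.1) true p.1 p.2 = p.2 + 1 - p.1 ∧
        2 * cnt (extractW n k F.1) false p.1 p.2 = p.2 + 1 - p.1 :=
      fun F => cup_counts_bwd hkn (extractW n k F.1) (hstruct F).1 (hstruct F).2 F.2.1.2.1
    have horient : ∀ F : {F : Fin (n + 1) → Submodule ℂ (Fin n → ℂ) //
        InYS n k S C F ∧ TorusFixed n k F}, OrientsMatching n (extractW n k F.1) C :=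
      fun F => ⟨fun p hp h1 h2 => cup_opposite_bwd _ (hcnt F) hp h1 h2,
        ray_false_bwd hkn S hmatch _ (hstruct F).1 (hstruct F).2 F.2.1.2.2 (hcnt F)⟩
    set G : {F : Fin (n + 1) → Submodule ℂ (Fin n → ℂ) //
        InYS n k S C F ∧ TorusFixed n k F} →
        {w : Fin n → Bool // IsWeightSeq n k w ∧ OrientsMatching n w C} :=
      fun F => ⟨extractW n k F.1, (hstruct F).1, horient F⟩ with hG
    have hinj : Function.Injective G := by
      intro F F' heq
      have hw : extractW n k F.1 = extractW n k F'.1 := congrArg Subtype.val heq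
      apply Subtype.ext
      funext i
      rw [(hstruct F).2 i, (hstruct F').2 i, hw]
    have hsurj : Function.Surjective G := by
      rintro ⟨w, hw, hor⟩
      have hNF := phi_isNFlag hkn w hw
      have hCC := phi_cupCond hkn w hw hor.1
      have hRC := phi_rayCond hkn S hmatch w hw hor.1 hor.2
      have hTF := phi_torusFixed (k := k) w
      refine ⟨⟨PhiFlag n k w, ⟨hNF, hCC, hRC⟩, hTF⟩, ?_⟩
      apply Subtype.ext
      show extractW n k (PhiFlag n k w) = w
      exact extractW_phi hkn w hw
    rw [Nat.card_eq_of_bijective G ⟨hinj, hsurj⟩]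
    exact card_orientations C hmatch.1

end Springer
end

section
/- Let F be a complete N-invariant flag and let a, b, δ be positive integers with b = a + 2δ − 1 ≤ n and δ ≤ k. If N^δ(F_b) = F_{a−1}, then ker(N^δ) ⊆ F_b; moreover the kernel of the restriction of N^δ to F_b equals ker(N^δ), which has dimension 2δ. -/
open Module

namespace Springer

lemma Nmap_single (n k m : ℕ) (hm : m + 1 < n) (hk : m + 1 ≠ n - k) :
    Nmap n k (Pi.single (⟨m + 1, hm⟩ : Fin n) (1 : ℂ))
      = Pi.single (⟨m, by omega⟩ : Fin n) 1 := by
  funext j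
  simp only [Nmap, LinearMap.coe_mk, AddHom.coe_mk]
  by_cases h : j.val + 1 < n ∧ j.val + 1 ≠ n - k
  · rw [dif_pos h]
    rcases eq_or_ne j.val m with he | he
    · have h1 : (⟨j.val + 1, h.1⟩ : Fin n) = ⟨m + 1, hm⟩ := by simp [he]
      have h2 : j = ⟨m, by omega⟩ := by apply Fin.ext; exact he
      rw [h1, h2, Pi.single_eq_same, Pi.single_eq_same]
    · rw [Pi.single_eq_of_ne (by simp [Fin.ext_iff]; omega),
        Pi.single_eq_of_ne (by simp [Fin.ext_iff]; omega)]
  · rw [dif_neg h, eq_comm]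
    apply Pi.single_eq_of_ne
    simp only [ne_eq, Fin.ext_iff]
    intro hjm
    exact h ⟨by omega, by omega⟩

lemma Nmap_pow_single (n k δ j : ℕ) (hj : j + δ < n)
    (hcross : ¬ (j < n - k ∧ n - k ≤ j + δ)) :
    ((Nmap n k) ^ δ) (Pi.single (⟨j + δ, hj⟩ : Fin n) (1 : ℂ))
      = Pi.single (⟨j, by omega⟩ : Fin n) 1 := by
  induction δ with
  | zero => simp
  | succ d ih =>
    rw [pow_succ, Module.End.mul_apply]
    have h1 : (⟨j + (d + 1), hj⟩ : Fin n) = ⟨(j + d) + 1, by omega⟩ := by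
      simp [Fin.ext_iff]; omega
    rw [h1, Nmap_single n k (j + d) (by omega) (by omega)]
    exact ih (by omega) (by omega)

lemma Nmap_finrank_ker_le (n k δ : ℕ) (hkn : 2 * k ≤ n) (hδk : δ ≤ k) :
    finrank ℂ (LinearMap.ker ((Nmap n k) ^ δ)) ≤ 2 * δ := by
  have hV : finrank ℂ (Fin n → ℂ) = n := Module.finrank_fin_fun ℂ
  have hfull := LinearMap.finrank_range_add_finrank_ker ((Nmap n k) ^ δ)
  rw [hV] at hfull
  obtain ⟨ι, hinj, hmem⟩ : ∃ ι : Fin (n - 2 * δ) → Fin n, Function.Injective ι ∧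
      ∀ i, (Pi.single (ι i) 1 : Fin n → ℂ) ∈ LinearMap.range ((Nmap n k) ^ δ) := by
    refine ⟨fun i => if h : i.val < n - k - δ then ⟨i.val, by omega⟩ else ⟨i.val + δ,
      by have := i.isLt; omega⟩, ?_, ?_⟩
    · intro i i' h
      apply Fin.ext
      beta_reduce at h
      split_ifs at h <;> simp [Fin.ext_iff] at h <;> omega
    · intro i
      have hi := i.isLt
      beta_reduce
      by_cases hc : i.val < n - k - δ
      · rw [dif_pos hc]
        exact ⟨Pi.single ⟨i.val + δ, by omega⟩ 1,
          Nmap_pow_single n k δ i.val (by omega) (by omega)⟩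
      · rw [dif_neg hc]
        exact ⟨Pi.single ⟨i.val + δ + δ, by omega⟩ 1,
          Nmap_pow_single n k δ (i.val + δ) (by omega) (by omega)⟩
  have hli : LinearIndependent ℂ (fun i => (Pi.single (ι i) 1 : Fin n → ℂ)) := by
    have hb := (Pi.basisFun ℂ (Fin n)).linearIndependent.comp ι hinj
    have he : (⇑(Pi.basisFun ℂ (Fin n)) ∘ ι) = fun i => (Pi.single (ι i) 1 : Fin n → ℂ) := by
      funext i
      simp [Function.comp]
    rwa [he] at hb
  have hspan : Submodule.span ℂ (Set.range (fun i => (Pi.single (ι i) 1 : Fin n → ℂ)))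
      ≤ LinearMap.range ((Nmap n k) ^ δ) := by
    rw [Submodule.span_le]
    rintro _ ⟨i, rfl⟩
    exact hmem i
  have hcard : finrank ℂ (Submodule.span ℂ (Set.range (fun i => (Pi.single (ι i) 1 : Fin n → ℂ))))
      = n - 2 * δ := by
    rw [finrank_span_eq_card hli, Fintype.card_fin]
  have hge : n - 2 * δ ≤ finrank ℂ (LinearMap.range ((Nmap n k) ^ δ)) := by
    rw [← hcard]
    exact Submodule.finrank_mono hspan
  omega

/-- If `b = a + 2δ - 1 ≤ n`, `δ ≤ k`, and `N^δ (F b) = F (a-1)` for a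
complete `N`-invariant flag `F`, then `ker (N^δ) ⊆ F b`; moreover the kernel of the
restriction of `N^δ` to `F b` equals `ker (N^δ)`, which has dimension `2δ`. -/
theorem kernel_in_flag (n k : ℕ) (hn : 1 ≤ n) (hkn : 2 * k ≤ n)
    (F : Fin (n + 1) → Submodule ℂ (Fin n → ℂ)) (hF : IsNFlag n k F)
    (a b δ : ℕ) (ha : 1 ≤ a) (hδ : 1 ≤ δ) (hb : b = a + 2 * δ - 1) (hbn : b ≤ n)
    (hδk : δ ≤ k)
    (hmap : Submodule.map ((Nmap n k) ^ δ) (F ⟨b, by omega⟩) = F ⟨a - 1, by omega⟩) :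
    LinearMap.ker ((Nmap n k) ^ δ) ≤ F ⟨b, by omega⟩ ∧
    F ⟨b, by omega⟩ ⊓ LinearMap.ker ((Nmap n k) ^ δ) = LinearMap.ker ((Nmap n k) ^ δ) ∧
    finrank ℂ (LinearMap.ker ((Nmap n k) ^ δ)) = 2 * δ := by
  have hV : finrank ℂ (Fin n → ℂ) = n := Module.finrank_fin_fun ℂ
  set f := (Nmap n k) ^ δ with hf
  set W := F ⟨b, by omega⟩ with hW
  have hdimW : finrank ℂ W = b := hF.2.1 ⟨b, by omega⟩
  have hdimA : finrank ℂ (F ⟨a - 1, by omega⟩) = a - 1 := hF.2.1 ⟨a - 1, by omega⟩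
  have hrn := LinearMap.finrank_range_add_finrank_ker (f.domRestrict W)
  have hrange : LinearMap.range (f.domRestrict W) = F ⟨a - 1, by omega⟩ :=
    (LinearMap.range_domRestrict W f).trans hmap
  have hkerres : finrank ℂ (LinearMap.ker (f.domRestrict W))
      = finrank ℂ (W ⊓ LinearMap.ker f : Submodule ℂ (Fin n → ℂ)) := by
    rw [LinearMap.ker_domRestrict, ← Submodule.map_comap_subtype, Submodule.finrank_map_subtype_eq]
  have hinf : finrank ℂ (W ⊓ LinearMap.ker f : Submodule ℂ (Fin n → ℂ)) = 2 * δ := by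
    rw [hrange, hdimA, hkerres] at hrn
    omega
  have hkerle : finrank ℂ (LinearMap.ker f) ≤ 2 * δ := Nmap_finrank_ker_le n k δ hkn hδk
  have hle : W ⊓ LinearMap.ker f ≤ LinearMap.ker f := inf_le_right
  have hker2 : finrank ℂ (LinearMap.ker f) = 2 * δ := by
    have := Submodule.finrank_mono (s := W ⊓ LinearMap.ker f) (t := LinearMap.ker f) hle
    omega
  have heq : W ⊓ LinearMap.ker f = LinearMap.ker f :=
    Submodule.eq_of_le_of_finrank_le hle (by omega)
  exact ⟨heq ▸ inf_le_left, heq, hker2⟩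


end Springer
end

section
/- Let C be a crossingless matching on {1,…,n} with partner map σ, and let ∼_C be the equivalence relation on {0,1,…,n} generated by the relations a ∼_C σ(a+1) for every a such that a+1 is a left cup endpoint of C. If {a,b} is a cup of C with a < b (so b = σ(a)), then b ∼_C a−1 and a ∼_C b−1. -/
open Module

namespace Springer

private lemma key_interval (n : ℕ) (C : CrossinglessMatching n) :
    ∀ d a b, b - a ≤ d → a < b →
    (∀ m, a < m → m < b → ∃ q ∈ C.cups, (a < q.1 ∧ q.2 < b) ∧ (m = q.1 ∨ m = q.2)) →
    simRel n C a (b - 1) := by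
  intro d
  induction d with
  | zero => intro a b hd hab _; omega
  | succ d ih =>
    intro a b hd hab H
    rcases Nat.lt_or_ge (a + 1) b with h1 | h1
    · obtain ⟨q, hq, ⟨hq1, hq2⟩, hm⟩ := H (a + 1) (by omega) h1
      obtain ⟨_, hlt, _⟩ := C.mem_range q hq
      have hq1eq : q.1 = a + 1 := by omega
      have hrel : cupRel n C a q.2 := ⟨q, hq, by omega, rfl⟩
      by_cases hc : q.2 = b - 1
      · exact hc ▸ Relation.EqvGen.rel _ _ hrel
      · have H' : ∀ m, q.2 < m → m < b →
            ∃ q' ∈ C.cups, (q.2 < q'.1 ∧ q'.2 < b) ∧ (m = q'.1 ∨ m = q'.2) := by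
          intro m hm1 hm2
          obtain ⟨q', hq', ⟨h1', h2'⟩, hm'⟩ := H m (by omega) hm2
          obtain ⟨_, hlt', _⟩ := C.mem_range q' hq'
          refine ⟨q', hq', ⟨?_, h2'⟩, hm'⟩
          by_contra hle
          have hm2' : m = q'.2 := by omega
          have hne : q' ≠ q := by
            intro h; rw [h] at hm2'; omega
          obtain ⟨d1, d2, d3, d4⟩ := C.disjoint' q' hq' q hq hne
          have hnc := C.noncross q hq q' hq'
          omega
        have hstep : simRel n C q.2 (b - 1) := ih q.2 b (by omega) (by omega) H'
        exact Relation.EqvGen.trans _ _ _ (Relation.EqvGen.rel _ _ hrel) hstep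
    · have hb : b - 1 = a := by omega
      rw [hb]; exact Relation.EqvGen.refl a

/-- If `{a, b}` is a cup of `C` with `a < b`, then `b ∼_C a - 1` and
`a ∼_C b - 1`. -/
theorem cup_equivalences (n : ℕ) (hn : 1 ≤ n) (C : CrossinglessMatching n)
    (p : ℕ × ℕ) (hp : p ∈ C.cups) :
    simRel n C p.2 (p.1 - 1) ∧ simRel n C p.1 (p.2 - 1) := by
  obtain ⟨h1, h2, h3⟩ := C.mem_range p hp
  constructor
  · exact Relation.EqvGen.symm _ _
      (Relation.EqvGen.rel _ _ ⟨p, hp, by omega, rfl⟩)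
  · refine key_interval n C (p.2 - p.1) p.1 p.2 le_rfl h2 ?_
    intro m hm1 hm2
    obtain ⟨q, hq, hmq⟩ := C.rays_outside p hp m hm1 hm2
    obtain ⟨_, hlt', _⟩ := C.mem_range q hq
    have hne : q ≠ p := by
      intro h; rw [h] at hmq; omega
    obtain ⟨d1, d2, d3, d4⟩ := C.disjoint' q hq p hp hne
    have hnc1 := C.noncross p hp q hq
    have hnc2 := C.noncross q hq p hp
    exact ⟨q, hq, by omega, hmq⟩

end Springer
end
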